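/- arXiv:1006.5326 — 2 statements merged into one kernel-verified Lean document; each statement's English description precedes it below -/
import Mathlib

section
/- Let n be a positive integer and N = n(n+1)/2. Let Q̂_1, ..., Q̂_N be real symmetric n×n matrices forming an orthonormal basis of the space of real symmetric n×n matrices with respect to the Frobenius inner product ⟨A,B⟩ = trace(AᵀB). Then for all nonnegative reals x_1, ..., x_N, one has Σ_{α,β=1}^N x_α x_β ‖[Q̂_α, Q̂_β]‖² ≤ (Σ_{α=1}^N x_α)². -/
open Matrix BigOperators

/-- Squared Frobenius norm of a real square matrix. -/
def frobSq {n : ℕ} (A : Matrix (Fin n) (Fin n) ℝ) : ℝ := ∑ i, ∑ j, (A i j) ^ 2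

/-- Frobenius inner product of two real square matrices. -/
def frobInner {n : ℕ} (A B : Matrix (Fin n) (Fin n) ℝ) : ℝ := ∑ i, ∑ j, A i j * B i j

/-- Commutator of two square matrices. -/
def matComm {n : ℕ} (A B : Matrix (Fin n) (Fin n) ℝ) : Matrix (Fin n) (Fin n) ℝ :=
  A * B - B * A

open Finset

namespace DDVV

variable {n : ℕ}

/-! ### Basic facts about the Frobenius inner product -/

lemma frobSq_nonneg (A : Matrix (Fin n) (Fin n) ℝ) : 0 ≤ frobSq A := by
  apply Finset.sum_nonneg; intro i _; apply Finset.sum_nonneg; intro j _; positivity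

lemma frobSq_eq_inner (A : Matrix (Fin n) (Fin n) ℝ) : frobSq A = frobInner A A := by
  simp [frobSq, frobInner, sq]

lemma frobInner_comm (A B : Matrix (Fin n) (Fin n) ℝ) : frobInner A B = frobInner B A := by
  simp [frobInner, mul_comm]

lemma frobInner_sub_left (A B C : Matrix (Fin n) (Fin n) ℝ) :
    frobInner (A - B) C = frobInner A C - frobInner B C := by
  simp [frobInner, sub_mul, Finset.sum_sub_distrib]

lemma frobInner_sum_left {κ : Type*} (s : Finset κ) (f : κ → Matrix (Fin n) (Fin n) ℝ)
    (C : Matrix (Fin n) (Fin n) ℝ) :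
    frobInner (∑ k ∈ s, f k) C = ∑ k ∈ s, frobInner (f k) C := by
  unfold frobInner
  have h : ∀ i j, (∑ k ∈ s, f k) i j = ∑ k ∈ s, f k i j := by
    intro i j; simp [Matrix.sum_apply]
  simp_rw [h, Finset.sum_mul]
  refine Eq.trans (Finset.sum_congr rfl fun i _ => Finset.sum_comm) Finset.sum_comm

lemma frobInner_smul_left (c : ℝ) (A B : Matrix (Fin n) (Fin n) ℝ) :
    frobInner (c • A) B = c * frobInner A B := by
  simp [frobInner, Finset.mul_sum, mul_assoc]

lemma frobInner_sub_right (A B C : Matrix (Fin n) (Fin n) ℝ) :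
    frobInner A (B - C) = frobInner A B - frobInner A C := by
  rw [frobInner_comm, frobInner_sub_left, frobInner_comm B A, frobInner_comm C A]

/-- Bessel's inequality for a finite orthonormal family of matrices. -/
lemma bessel {ι : Type*} [DecidableEq ι] (T : Finset ι)
    (Q : ι → Matrix (Fin n) (Fin n) ℝ)
    (horth : ∀ α ∈ T, ∀ β ∈ T, frobInner (Q α) (Q β) = if α = β then 1 else 0)
    (e : Matrix (Fin n) (Fin n) ℝ) :
    ∑ α ∈ T, (frobInner (Q α) e) ^ 2 ≤ frobSq e := by
  classical
  set c : ι → ℝ := fun α => frobInner (Q α) e with hc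
  set S : Matrix (Fin n) (Fin n) ℝ := ∑ α ∈ T, c α • Q α with hS
  have hSe : frobInner S e = ∑ α ∈ T, (c α) ^ 2 := by
    rw [hS, frobInner_sum_left]
    refine Finset.sum_congr rfl fun α hα => ?_
    rw [frobInner_smul_left, sq]
  have hQS : ∀ α ∈ T, frobInner (Q α) S = c α := by
    intro α hα
    rw [frobInner_comm, hS, frobInner_sum_left]
    have : ∀ β ∈ T, frobInner (c β • Q β) (Q α) = if β = α then c β else 0 := by
      intro β hβ
      rw [frobInner_smul_left, horth β hβ α hα]
      by_cases h : β = α <;> simp [h]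
    rw [Finset.sum_congr rfl this, Finset.sum_ite_eq' T α c, if_pos hα]
  have hSS : frobInner S S = ∑ α ∈ T, (c α) ^ 2 := by
    nth_rewrite 1 [hS]
    rw [frobInner_sum_left]
    refine Finset.sum_congr rfl fun α hα => ?_
    rw [frobInner_smul_left, hQS α hα, sq]
  have h0 : (0:ℝ) ≤ frobSq (e - S) := frobSq_nonneg _
  rw [frobSq_eq_inner, frobInner_sub_left, frobInner_sub_right, frobInner_sub_right,
    hSe, hSS, frobInner_comm e S, hSe] at h0
  rw [frobSq_eq_inner]
  have hgoal : ∑ α ∈ T, (frobInner (Q α) e) ^ 2 = ∑ α ∈ T, c α ^ 2 := rfl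
  rw [hgoal]
  linarith

/-! ### Invariance of the Frobenius norm under orthogonal conjugation -/

lemma frobSq_eq_trace (A : Matrix (Fin n) (Fin n) ℝ) : frobSq A = Matrix.trace (Aᵀ * A) := by
  unfold frobSq
  simp only [Matrix.trace, Matrix.diag, Matrix.mul_apply, Matrix.transpose_apply, sq]
  exact Finset.sum_comm

lemma frobSq_mul_orth_left (U A : Matrix (Fin n) (Fin n) ℝ) (hU : Uᵀ * U = 1) :
    frobSq (U * A) = frobSq A := by
  rw [frobSq_eq_trace, frobSq_eq_trace, Matrix.transpose_mul, Matrix.mul_assoc,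
    ← Matrix.mul_assoc Uᵀ U A, hU, Matrix.one_mul]

lemma frobSq_mul_orth_right (V A : Matrix (Fin n) (Fin n) ℝ) (hV : V * Vᵀ = 1) :
    frobSq (A * V) = frobSq A := by
  rw [frobSq_eq_trace, frobSq_eq_trace, Matrix.transpose_mul, Matrix.mul_assoc,
    Matrix.trace_mul_comm, Matrix.mul_assoc, Matrix.mul_assoc, hV, Matrix.mul_one]

/-! ### The weighted-Laplacian eigenvalue bound -/

/-- Key combinatorial lemma: for symmetric weights `c` in `[0,1]` vanishing on the diagonal,
`∑ c i j (λ i - λ j)² ≤ (2 + ∑ c) * ∑ λ²`. -/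
lemma laplacian_bound {ι : Type*} [Fintype ι] [DecidableEq ι]
    (c : ι → ι → ℝ) (lam : ι → ℝ)
    (hsym : ∀ i j, c i j = c j i) (hdiag : ∀ i, c i i = 0)
    (h0 : ∀ i j, 0 ≤ c i j) (h1 : ∀ i j, c i j ≤ 1) :
    ∑ i, ∑ j, c i j * (lam i - lam j) ^ 2 ≤ (2 + ∑ i, ∑ j, c i j) * ∑ i, (lam i) ^ 2 := by
  classical
  set D : ι → ℝ := fun i => ∑ j, c i j with hD
  set C2 : ℝ := ∑ i, ∑ j, c i j with hC2
  have hC2D : C2 = ∑ i, D i := rfl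
  have hD0 : ∀ i, 0 ≤ D i := fun i => Finset.sum_nonneg fun j _ => h0 i j
  set p : ι → ℝ := fun i => max (D i) 1 with hp
  have hp1 : ∀ i, (1:ℝ) ≤ p i := fun i => le_max_right _ _
  have hppos : ∀ i, (0:ℝ) < p i := fun i => lt_of_lt_of_le one_pos (hp1 i)
  have hDp : ∀ i, D i ≤ p i := fun i => le_max_left _ _
  have hrow : ∀ i, ∑ k, c k i = D i := by
    intro i; rw [hD]; exact Finset.sum_congr rfl fun k _ => hsym k i
  -- 2 * D i ≤ C2
  have hDC : ∀ i, 2 * D i ≤ C2 := by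
    intro i
    have split : C2 = D i + ∑ k ∈ Finset.univ.erase i, D k := by
      rw [hC2D, ← Finset.add_sum_erase _ _ (Finset.mem_univ i)]
    have hge : ∑ k ∈ Finset.univ.erase i, c k i ≤ ∑ k ∈ Finset.univ.erase i, D k :=
      Finset.sum_le_sum fun k _ =>
        Finset.single_le_sum (fun l _ => h0 k l) (Finset.mem_univ i)
    have h2 : ∑ k ∈ Finset.univ.erase i, c k i = D i := by
      rw [Finset.sum_erase_eq_sub (Finset.mem_univ i), hrow i, hdiag i, sub_zero]
    linarith
  -- 2 D i + 2 D j ≤ C2 + 2 c i j  for i ≠ j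
  have hDD : ∀ i j, i ≠ j → 2 * D i + 2 * D j ≤ C2 + 2 * c i j := by
    intro i j hij
    have hjmem : j ∈ Finset.univ.erase i := Finset.mem_erase.2 ⟨Ne.symm hij, Finset.mem_univ j⟩
    set E : Finset ι := (Finset.univ.erase i).erase j with hE
    have split : C2 = D i + (D j + ∑ k ∈ E, D k) := by
      rw [hC2D, ← Finset.add_sum_erase _ _ (Finset.mem_univ i), ← Finset.add_sum_erase _ _ hjmem]
    have hge : ∑ k ∈ E, (c k i + c k j) ≤ ∑ k ∈ E, D k := by
      refine Finset.sum_le_sum fun k _ => ?_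
      have hpair : c k i + c k j = ∑ l ∈ ({i, j} : Finset ι), c k l :=
        (Finset.sum_pair hij).symm
      rw [hpair, hD]
      exact Finset.sum_le_sum_of_subset_of_nonneg (Finset.subset_univ _)
        (fun l _ _ => h0 k l)
    have hEi : ∑ k ∈ E, c k i = D i - c i j := by
      rw [hE, Finset.sum_erase_eq_sub hjmem, Finset.sum_erase_eq_sub (Finset.mem_univ i),
        hrow i, hdiag i, hsym j i, sub_zero]
    have hEj : ∑ k ∈ E, c k j = D j - c i j := by
      rw [hE, Finset.sum_erase_eq_sub hjmem, Finset.sum_erase_eq_sub (Finset.mem_univ i),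
        hrow j, hdiag j]
      ring
    have hsplitsum : ∑ k ∈ E, (c k i + c k j) = (D i - c i j) + (D j - c i j) := by
      rw [Finset.sum_add_distrib, hEi, hEj]
    linarith
  -- p j ≤ 1 + C2/2 - D i for all i j
  have hB : ∀ i j, j ≠ i → p j ≤ 1 + C2 / 2 - D i := by
    intro i j hji
    apply max_le
    · have h1' := hDD i j (fun e => hji e.symm)
      have := h1 i j
      linarith
    · linarith [hDC i]
  have hBpos : ∀ i, 0 < 1 + C2 / 2 - D i := by
    intro i; have := hDC i; linarith
  -- row coefficient bound
  have hA : ∀ i, ∑ j, c i j * (1 + p j / p i) ≤ 1 + C2 / 2 := by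
    intro i
    have step1 : ∑ j, c i j * (1 + p j / p i)
        ≤ ∑ j, c i j * (1 + (1 + C2 / 2 - D i) / p i) := by
      refine Finset.sum_le_sum fun j _ => ?_
      by_cases hji : j = i
      · subst hji; rw [hdiag]; simp
      · refine mul_le_mul_of_nonneg_left ?_ (h0 i j)
        have := (div_le_div_iff_of_pos_right (hppos i)).mpr (hB i j hji)
        linarith
    have step2 : ∑ j, c i j * (1 + (1 + C2 / 2 - D i) / p i)
        = D i + (D i * (1 + C2 / 2 - D i)) / p i := by
      rw [← Finset.sum_mul, show (∑ j, c i j) = D i from rfl]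
      field_simp
    have step3 : (D i * (1 + C2 / 2 - D i)) / p i ≤ 1 + C2 / 2 - D i := by
      rw [div_le_iff₀ (hppos i)]
      nlinarith [hDp i, (hBpos i).le]
    calc ∑ j, c i j * (1 + p j / p i)
        ≤ ∑ j, c i j * (1 + (1 + C2 / 2 - D i) / p i) := step1
      _ = D i + (D i * (1 + C2 / 2 - D i)) / p i := step2
      _ ≤ D i + (1 + C2 / 2 - D i) := by linarith
      _ = 1 + C2 / 2 := by ring
  -- pointwise bound
  have hpt : ∀ i j, c i j * (lam i - lam j) ^ 2
      ≤ c i j * ((1 + p j / p i) * lam i ^ 2) + c i j * ((1 + p i / p j) * lam j ^ 2) := by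
    intro i j
    have hu := hppos i
    have hv := hppos j
    have key : (0:ℝ) ≤ (p j * lam i + p i * lam j) ^ 2 / (p i * p j) :=
      div_nonneg (sq_nonneg _) (le_of_lt (mul_pos hu hv))
    have expand : (p j / p i) * lam i ^ 2 + (p i / p j) * lam j ^ 2 + 2 * (lam i * lam j)
        = (p j * lam i + p i * lam j) ^ 2 / (p i * p j) := by
      field_simp
      ring
    have key' : (0:ℝ) ≤ (p j / p i) * lam i ^ 2 + (p i / p j) * lam j ^ 2
        + 2 * (lam i * lam j) := by rw [expand]; exact key
    nlinarith [key', h0 i j, sq_nonneg (lam i - lam j)]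
  -- assembly
  have hsum1 : ∀ i, ∑ j, c i j * ((1 + p j / p i) * lam i ^ 2)
      = lam i ^ 2 * ∑ j, c i j * (1 + p j / p i) := by
    intro i
    rw [Finset.mul_sum]
    exact Finset.sum_congr rfl fun j _ => by ring
  calc ∑ i, ∑ j, c i j * (lam i - lam j) ^ 2
      ≤ ∑ i, ∑ j, (c i j * ((1 + p j / p i) * lam i ^ 2)
          + c i j * ((1 + p i / p j) * lam j ^ 2)) := by
        exact Finset.sum_le_sum fun i _ => Finset.sum_le_sum fun j _ => hpt i j
    _ = (∑ i, ∑ j, c i j * ((1 + p j / p i) * lam i ^ 2))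
          + ∑ i, ∑ j, c i j * ((1 + p i / p j) * lam j ^ 2) := by
        simp [Finset.sum_add_distrib]
    _ ≤ (1 + C2 / 2) * (∑ i, lam i ^ 2) + (1 + C2 / 2) * (∑ i, lam i ^ 2) := by
        have part1 : ∑ i, ∑ j, c i j * ((1 + p j / p i) * lam i ^ 2)
            ≤ (1 + C2 / 2) * ∑ i, lam i ^ 2 := by
          rw [Finset.mul_sum]
          refine Finset.sum_le_sum fun i _ => ?_
          rw [hsum1 i]
          rw [mul_comm ((1 + C2/2)) (lam i ^ 2)]
          exact mul_le_mul_of_nonneg_left (hA i) (sq_nonneg _)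
        have part2 : ∑ i, ∑ j, c i j * ((1 + p i / p j) * lam j ^ 2)
            ≤ (1 + C2 / 2) * ∑ i, lam i ^ 2 := by
          rw [Finset.sum_comm, Finset.mul_sum]
          refine Finset.sum_le_sum fun j _ => ?_
          have hflip : ∀ i, c i j * ((1 + p i / p j) * lam j ^ 2)
              = c j i * ((1 + p i / p j) * lam j ^ 2) := fun i => by rw [hsym i j]
          rw [Finset.sum_congr rfl fun i _ => hflip i]
          rw [hsum1 j]
          rw [mul_comm ((1 + C2/2)) (lam j ^ 2)]
          exact mul_le_mul_of_nonneg_left (hA j) (sq_nonneg _)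
        linarith
    _ = (2 + C2) * ∑ i, lam i ^ 2 := by ring

/-! ### The row bound -/

/-- For `B` symmetric of unit Frobenius norm and an orthonormal family `Q α`, `α ∈ T`,
the sum of the squared commutator norms is at most `1 + |T|`. -/
lemma row_bound {ι : Type*} [DecidableEq ι] (T : Finset ι)
    (B : Matrix (Fin n) (Fin n) ℝ) (hB : Bᵀ = B) (hBn : frobSq B = 1)
    (Q : ι → Matrix (Fin n) (Fin n) ℝ) (hQs : ∀ α ∈ T, (Q α)ᵀ = Q α)
    (horth : ∀ α ∈ T, ∀ β ∈ T, frobInner (Q α) (Q β) = if α = β then 1 else 0) :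
    ∑ α ∈ T, frobSq (matComm B (Q α)) ≤ 1 + T.card := by
  classical
  have hherm : B.IsHermitian := by
    rw [Matrix.IsHermitian, Matrix.conjTranspose_eq_transpose_of_trivial, hB]
  set U : Matrix (Fin n) (Fin n) ℝ := (hherm.eigenvectorUnitary : Matrix (Fin n) (Fin n) ℝ)
    with hUdef
  set lam : Fin n → ℝ := hherm.eigenvalues with hlam
  have hUmem := hherm.eigenvectorUnitary.2
  have hUU : Uᵀ * U = 1 := by
    have h := (Matrix.mem_unitaryGroup_iff').mp hUmem
    rwa [Matrix.star_eq_conjTranspose, Matrix.conjTranspose_eq_transpose_of_trivial] at h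
  have hUU' : U * Uᵀ = 1 := by
    have h := (Matrix.mem_unitaryGroup_iff).mp hUmem
    rwa [Matrix.star_eq_conjTranspose, Matrix.conjTranspose_eq_transpose_of_trivial] at h
  have hspec : B = U * Matrix.diagonal lam * Uᵀ := by
    have h := hherm.spectral_theorem
    rw [Unitary.conjStarAlgAut_apply,
      Matrix.star_eq_conjTranspose, Matrix.conjTranspose_eq_transpose_of_trivial,
      RCLike.ofReal_real_eq_id, Function.id_comp] at h
    exact h
  have hconj : ∀ M N : Matrix (Fin n) (Fin n) ℝ,
      (U * M * Uᵀ) * (U * N * Uᵀ) = U * (M * N) * Uᵀ := by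
    intro M N
    simp only [Matrix.mul_assoc]
    rw [← Matrix.mul_assoc Uᵀ U (N * Uᵀ), hUU, Matrix.one_mul]
  set X : ι → Matrix (Fin n) (Fin n) ℝ := fun α => Uᵀ * Q α * U with hX
  have hQX : ∀ α, Q α = U * X α * Uᵀ := by
    intro α
    rw [hX]
    simp only
    have h : U * (Uᵀ * Q α * U) * Uᵀ = (U * Uᵀ) * Q α * (U * Uᵀ) := by
      simp only [Matrix.mul_assoc]
    rw [h, hUU', Matrix.one_mul, Matrix.mul_one]
  have hXsym : ∀ α ∈ T, ∀ i j, X α i j = X α j i := by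
    intro α hα i j
    have ht : (X α)ᵀ = X α := by
      rw [hX]
      simp only
      rw [Matrix.transpose_mul, Matrix.transpose_mul, Matrix.transpose_transpose,
        hQs α hα, Matrix.mul_assoc]
    conv_lhs => rw [← ht]
    rfl
  have hXfrob : ∀ α ∈ T, frobSq (X α) = 1 := by
    intro α hα
    rw [hX]
    simp only
    rw [frobSq_mul_orth_right U _ hUU',
      frobSq_mul_orth_left Uᵀ _ (by rw [Matrix.transpose_transpose]; exact hUU'),
      frobSq_eq_inner, horth α hα α hα, if_pos rfl]
  -- commutator norm formula
  have hcomm : ∀ α ∈ T, frobSq (matComm B (Q α))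
      = ∑ i, ∑ j, (lam i - lam j) ^ 2 * (X α i j) ^ 2 := by
    intro α hα
    have hmc : matComm B (Q α)
        = U * (Matrix.diagonal lam * X α - X α * Matrix.diagonal lam) * Uᵀ := by
      show B * Q α - Q α * B = _
      rw [hspec, hQX α, hconj, hconj, ← Matrix.sub_mul, ← Matrix.mul_sub]
    rw [hmc, frobSq_mul_orth_right Uᵀ _ (by rw [Matrix.transpose_transpose]; exact hUU),
      frobSq_mul_orth_left U _ hUU]
    unfold frobSq
    refine Finset.sum_congr rfl fun i _ => Finset.sum_congr rfl fun j _ => ?_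
    rw [Matrix.sub_apply, Matrix.diagonal_mul, Matrix.mul_diagonal]
    ring
  -- eigenvalues have unit square sum
  have hlamsq : ∑ i, (lam i) ^ 2 = 1 := by
    have h1 : frobSq B = frobSq (Matrix.diagonal lam) := by
      rw [hspec, frobSq_mul_orth_right Uᵀ _ (by rw [Matrix.transpose_transpose]; exact hUU),
        frobSq_mul_orth_left U _ hUU]
    have h2 : frobSq (Matrix.diagonal lam) = ∑ i, (lam i) ^ 2 := by
      unfold frobSq
      refine Finset.sum_congr rfl fun i _ => ?_
      rw [Finset.sum_eq_single i]
      · rw [Matrix.diagonal_apply_eq]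
      · intro j _ hji
        rw [Matrix.diagonal_apply_ne' _ hji]
        exact zero_pow (by norm_num)
      · intro h; exact absurd (Finset.mem_univ i) h
    rw [← h2, ← h1, hBn]
  -- column orthonormality
  have hcol : ∀ k l, ∑ a, U a k * U a l = if k = l then (1:ℝ) else 0 := by
    intro k l
    have h := congrFun (congrFun hUU k) l
    rw [Matrix.mul_apply] at h
    simp only [Matrix.transpose_apply] at h
    rw [h, Matrix.one_apply]
  -- entry formula for X
  have hXf : ∀ α, ∀ k l, X α k l = ∑ a, ∑ b, Q α a b * (U a k * U b l) := by
    intro α k l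
    rw [hX]
    simp only
    rw [Matrix.mul_apply]
    have h1 : ∀ b, (Uᵀ * Q α) k b * U b l = ∑ a, Q α a b * (U a k * U b l) := by
      intro b
      rw [Matrix.mul_apply, Finset.sum_mul]
      refine Finset.sum_congr rfl fun a _ => ?_
      rw [Matrix.transpose_apply]
      ring
    rw [Finset.sum_congr rfl fun b _ => h1 b]
    exact Finset.sum_comm
  -- the Bessel weights
  set c : Fin n → Fin n → ℝ :=
    fun i j => if i = j then 0 else ∑ α ∈ T, 2 * (X α i j) ^ 2 with hc
  have hc0 : ∀ i j, 0 ≤ c i j := by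
    intro i j
    rw [hc]
    simp only
    split
    · exact le_refl 0
    · exact Finset.sum_nonneg fun α _ => by positivity
  have hcsym : ∀ i j, c i j = c j i := by
    intro i j
    rw [hc]
    simp only
    by_cases h : i = j
    · rw [if_pos h, if_pos h.symm]
    · rw [if_neg h, if_neg (fun e => h e.symm)]
      exact Finset.sum_congr rfl fun α hα => by rw [hXsym α hα i j]
  have hcdiag : ∀ i, c i i = 0 := fun i => by rw [hc]; simp
  -- Bessel: c i j ≤ 1
  have hc1 : ∀ i j, c i j ≤ 1 := by
    intro i j
    by_cases h : i = j
    · rw [h, hcdiag]; norm_num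
    · set e : Matrix (Fin n) (Fin n) ℝ :=
        Matrix.of (fun a b => U a i * U b j + U a j * U b i) with he
      have hQe : ∀ α ∈ T, frobInner (Q α) e = 2 * X α i j := by
        intro α hα
        have heval : frobInner (Q α) e
            = (∑ a, ∑ b, Q α a b * (U a i * U b j))
              + ∑ a, ∑ b, Q α a b * (U a j * U b i) := by
          unfold frobInner
          rw [← Finset.sum_add_distrib]
          refine Finset.sum_congr rfl fun a _ => ?_
          rw [← Finset.sum_add_distrib]
          refine Finset.sum_congr rfl fun b _ => ?_
          simp only [he, Matrix.of_apply]
          ring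
        rw [heval, ← hXf α i j, ← hXf α j i, hXsym α hα j i]
        ring
      have hee : frobSq e = 2 := by
        unfold frobSq
        have hexp : ∀ a b : Fin n, (e a b) ^ 2
            = (U a i * U a i) * (U b j * U b j)
              + ((U a i * U a j) * (U b j * U b i)
                + ((U a j * U a i) * (U b i * U b j)
                  + (U a j * U a j) * (U b i * U b i))) := by
          intro a b
          simp only [he, Matrix.of_apply]
          ring
        rw [Finset.sum_congr rfl fun a _ => Finset.sum_congr rfl fun b _ => hexp a b]
        simp only [Finset.sum_add_distrib]
        rw [← Finset.sum_mul_sum, ← Finset.sum_mul_sum, ← Finset.sum_mul_sum,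
          ← Finset.sum_mul_sum]
        rw [hcol i i, hcol j j, hcol i j, hcol j i]
        have hji : ¬ j = i := fun e' => h e'.symm
        simp [h, hji]
        norm_num
      have hb := bessel T Q horth e
      rw [hee] at hb
      have hsum : ∑ α ∈ T, (frobInner (Q α) e) ^ 2 = 2 * ∑ α ∈ T, 2 * (X α i j) ^ 2 := by
        rw [Finset.mul_sum]
        refine Finset.sum_congr rfl fun α hα => ?_
        rw [hQe α hα]
        ring
      rw [hsum] at hb
      rw [hc]
      simp only
      rw [if_neg h]
      linarith
  -- budget
  have hbudget : ∑ i, ∑ j, c i j ≤ 2 * T.card := by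
    have hle : ∀ i j : Fin n, c i j ≤ ∑ α ∈ T, 2 * (X α i j) ^ 2 := by
      intro i j
      rw [hc]
      simp only
      split
      · exact Finset.sum_nonneg fun α _ => by positivity
      · exact le_refl _
    calc ∑ i, ∑ j, c i j ≤ ∑ i, ∑ j, ∑ α ∈ T, 2 * (X α i j) ^ 2 :=
          Finset.sum_le_sum fun i _ => Finset.sum_le_sum fun j _ => hle i j
      _ = ∑ i, ∑ α ∈ T, ∑ j, 2 * (X α i j) ^ 2 :=
          Finset.sum_congr rfl fun i _ => Finset.sum_comm
      _ = ∑ α ∈ T, ∑ i, ∑ j, 2 * (X α i j) ^ 2 := Finset.sum_comm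
      _ = ∑ α ∈ T, 2 * frobSq (X α) := by
          refine Finset.sum_congr rfl fun α _ => ?_
          unfold frobSq
          rw [Finset.mul_sum]
          refine Finset.sum_congr rfl fun i _ => ?_
          rw [Finset.mul_sum]
      _ = 2 * T.card := by
          rw [Finset.sum_congr rfl fun α hα => by rw [hXfrob α hα]]
          rw [Finset.sum_const, nsmul_eq_mul]
          ring
  -- key identity
  have hkey : 2 * ∑ α ∈ T, frobSq (matComm B (Q α))
      = ∑ i, ∑ j, c i j * (lam i - lam j) ^ 2 := by
    rw [Finset.sum_congr rfl hcomm]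
    have hswap : ∑ α ∈ T, ∑ i, ∑ j, (lam i - lam j) ^ 2 * (X α i j) ^ 2
        = ∑ i, ∑ j, ∑ α ∈ T, (lam i - lam j) ^ 2 * (X α i j) ^ 2 :=
      calc ∑ α ∈ T, ∑ i, ∑ j, (lam i - lam j) ^ 2 * (X α i j) ^ 2
          = ∑ i, ∑ α ∈ T, ∑ j, (lam i - lam j) ^ 2 * (X α i j) ^ 2 := Finset.sum_comm
        _ = ∑ i, ∑ j, ∑ α ∈ T, (lam i - lam j) ^ 2 * (X α i j) ^ 2 :=
            Finset.sum_congr rfl fun i _ => Finset.sum_comm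
    rw [hswap, Finset.mul_sum]
    refine Finset.sum_congr rfl fun i _ => ?_
    rw [Finset.mul_sum]
    refine Finset.sum_congr rfl fun j _ => ?_
    by_cases h : i = j
    · subst h
      simp [hcdiag i]
    · rw [hc]
      simp only
      rw [if_neg h, Finset.sum_mul, Finset.mul_sum]
      refine Finset.sum_congr rfl fun α _ => ?_
      ring
  -- conclusion
  have hlap := laplacian_bound c lam hcsym hcdiag hc0 hc1
  rw [hlamsq, mul_one] at hlap
  have : 2 * ∑ α ∈ T, frobSq (matComm B (Q α)) ≤ 2 + 2 * T.card := by
    rw [hkey]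
    linarith
  linarith

/-! ### Optimization over the simplex -/

section Simplex

variable {ι : Type*} [Fintype ι] [DecidableEq ι]

/-- The quadratic form. -/
def quadF (C : ι → ι → ℝ) (y : ι → ℝ) : ℝ := ∑ α, ∑ β, y α * y β * C α β

lemma score_le_of_max (C : ι → ι → ℝ) (hCsym : ∀ α β, C α β = C β α)
    (hC0 : ∀ α β, 0 ≤ C α β) (t : ℝ)
    (y : ι → ℝ) (hy : (∀ α, 0 ≤ y α) ∧ ∑ α, y α = t)
    (hmax : ∀ z : ι → ℝ, ((∀ α, 0 ≤ z α) ∧ ∑ α, z α = t) → quadF C z ≤ quadF C y)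
    (α β : ι) (hα : 0 < y α) :
    ∑ δ, C β δ * y δ ≤ ∑ δ, C α δ * y δ := by
  classical
  by_contra hcon
  push_neg at hcon
  set gα : ℝ := ∑ δ, C α δ * y δ with hgα
  set gβ : ℝ := ∑ δ, C β δ * y δ with hgβ
  have hαβ : α ≠ β := by
    rintro rfl
    exact lt_irrefl _ hcon
  have hCpos : (0:ℝ) < 2 * C α β + 2 := by linarith [hC0 α β]
  set ε : ℝ := min (y α) ((gβ - gα) / (2 * C α β + 2)) with hε
  have hεpos : 0 < ε := lt_min hα (div_pos (by linarith) hCpos)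
  have hεy : ε ≤ y α := min_le_left _ _
  have hεg : ε * (2 * C α β + 2) ≤ gβ - gα := by
    have h := min_le_right (y α) ((gβ - gα) / (2 * C α β + 2))
    rw [← hε] at h
    exact (le_div_iff₀ hCpos).mp h
  set d : ι → ℝ := fun γ => ε * ((if γ = β then (1:ℝ) else 0) - (if γ = α then (1:ℝ) else 0))
    with hd
  set z : ι → ℝ := fun γ => y γ + d γ with hz
  -- collapse lemma
  have hdsum : ∀ h : ι → ℝ, ∑ γ, d γ * h γ = ε * (h β - h α) := by
    intro h
    have hpt : ∀ γ, d γ * h γ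
        = ε * (if γ = β then h γ else 0) - ε * (if γ = α then h γ else 0) := by
      intro γ
      rw [hd]
      by_cases h1 : γ = β
      · subst h1
        have h2 : ¬ γ = α := fun e => hαβ e.symm
        simp [h2]
      · by_cases h2 : γ = α
        · subst h2
          simp [h1]
        · simp [h1, h2]
    rw [Finset.sum_congr rfl fun γ _ => hpt γ, Finset.sum_sub_distrib,
      ← Finset.mul_sum, ← Finset.mul_sum,
      Finset.sum_ite_eq' Finset.univ β h, Finset.sum_ite_eq' Finset.univ α h,
      if_pos (Finset.mem_univ β), if_pos (Finset.mem_univ α)]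
    ring
  -- z is feasible
  have hzS : (∀ γ, 0 ≤ z γ) ∧ ∑ γ, z γ = t := by
    constructor
    · intro γ
      have hdg : d γ = ε * ((if γ = β then (1:ℝ) else 0) - (if γ = α then (1:ℝ) else 0)) := rfl
      have hzg : z γ = y γ + d γ := rfl
      rw [hzg, hdg]
      by_cases h1 : γ = β
      · rw [if_pos h1, if_neg (fun e : γ = α => hαβ (e.symm.trans h1))]
        nlinarith [hy.1 γ]
      · rw [if_neg h1]
        by_cases h2 : γ = α
        · rw [if_pos h2]
          have h3 : ε ≤ y γ := by rw [h2]; exact hεy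
          nlinarith [hy.1 γ]
        · rw [if_neg h2]
          nlinarith [hy.1 γ]
    · have hsum : ∑ γ, z γ = ∑ γ, y γ + ∑ γ, d γ := by
        have hzg : ∀ γ, z γ = y γ + d γ := fun _ => rfl
        rw [Finset.sum_congr rfl fun γ _ => hzg γ]
        exact Finset.sum_add_distrib
      have hdz : ∑ γ, d γ = 0 := by
        have := hdsum (fun _ => 1)
        simpa using this
      rw [hsum, hdz, hy.2, add_zero]
  -- expansion of the quadratic form
  have hFz : quadF C z = quadF C y + 2 * ε * (gβ - gα)
      + ε ^ 2 * (C β β + C α α - 2 * C α β) := by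
    have hexp : quadF C z = quadF C y
        + (∑ γ, ∑ δ, d γ * y δ * C γ δ) + (∑ γ, ∑ δ, y γ * d δ * C γ δ)
        + ∑ γ, ∑ δ, d γ * d δ * C γ δ := by
      unfold quadF
      rw [hz]
      simp only
      have hpt : ∀ γ δ, (y γ + d γ) * (y δ + d δ) * C γ δ
          = y γ * y δ * C γ δ + (d γ * y δ * C γ δ + (y γ * d δ * C γ δ
            + d γ * d δ * C γ δ)) := by intro γ δ; ring
      rw [Finset.sum_congr rfl fun γ _ => Finset.sum_congr rfl fun δ _ => hpt γ δ]
      simp only [Finset.sum_add_distrib]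
      ring
    have h1 : ∑ γ, ∑ δ, d γ * y δ * C γ δ = ε * (gβ - gα) := by
      have hinner : ∀ γ, ∑ δ, d γ * y δ * C γ δ = d γ * ∑ δ, C γ δ * y δ := by
        intro γ
        rw [Finset.mul_sum]
        exact Finset.sum_congr rfl fun δ _ => by ring
      rw [Finset.sum_congr rfl fun γ _ => hinner γ, hdsum (fun γ => ∑ δ, C γ δ * y δ)]
    have h2 : ∑ γ, ∑ δ, y γ * d δ * C γ δ = ε * (gβ - gα) := by
      rw [Finset.sum_comm]
      have hinner : ∀ δ, ∑ γ, y γ * d δ * C γ δ = d δ * ∑ γ, C δ γ * y γ := by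
        intro δ
        rw [Finset.mul_sum]
        refine Finset.sum_congr rfl fun γ _ => ?_
        rw [hCsym δ γ]
        ring
      rw [Finset.sum_congr rfl fun δ _ => hinner δ, hdsum (fun δ => ∑ γ, C δ γ * y γ)]
    have h3 : ∑ γ, ∑ δ, d γ * d δ * C γ δ
        = ε ^ 2 * (C β β + C α α - 2 * C α β) := by
      have hinner : ∀ γ, ∑ δ, d γ * d δ * C γ δ = d γ * ∑ δ, d δ * C γ δ := by
        intro γ
        rw [Finset.mul_sum]
        exact Finset.sum_congr rfl fun δ _ => by ring
      have hin2 : ∀ γ, ∑ δ, d δ * C γ δ = ε * (C γ β - C γ α) :=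
        fun γ => hdsum (fun δ => C γ δ)
      rw [Finset.sum_congr rfl fun γ _ => hinner γ,
        Finset.sum_congr rfl fun γ _ => by rw [hin2 γ],
        hdsum (fun γ => ε * (C γ β - C γ α))]
      rw [hCsym α β]
      ring
    rw [hexp, h1, h2, h3]
    ring
  -- contradiction with maximality
  have hle := hmax z hzS
  rw [hFz] at hle
  have key : ε * (ε * (2 * C α β + 2)) ≤ ε * (gβ - gα) :=
    mul_le_mul_of_nonneg_left hεg hεpos.le
  have pos : 0 < ε * (gβ - gα) := mul_pos hεpos (by linarith)
  nlinarith [mul_nonneg (sq_nonneg ε) (hC0 β β), mul_nonneg (sq_nonneg ε) (hC0 α α)]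

end Simplex



end DDVV

open DDVV

/-- The polynomial form of the DDVV inequality along an orthonormal basis of the
space of real symmetric `n × n` matrices. -/
theorem ddvv_polynomial_form (n : ℕ) (hn : 0 < n)
    (Qhat : Fin (n * (n + 1) / 2) → Matrix (Fin n) (Fin n) ℝ)
    (hsymm : ∀ α, (Qhat α)ᵀ = Qhat α)
    (horth : ∀ α β, frobInner (Qhat α) (Qhat β) = if α = β then 1 else 0)
    (hspan : ∀ A : Matrix (Fin n) (Fin n) ℝ, Aᵀ = A →
      ∃ c : Fin (n * (n + 1) / 2) → ℝ, A = ∑ α, c α • Qhat α)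
    (x : Fin (n * (n + 1) / 2) → ℝ) (hx : ∀ α, 0 ≤ x α) :
    ∑ α, ∑ β, x α * x β * frobSq (matComm (Qhat α) (Qhat β)) ≤ (∑ α, x α) ^ 2 := by
  classical
  set C : Fin (n * (n + 1) / 2) → Fin (n * (n + 1) / 2) → ℝ :=
    fun α β => frobSq (matComm (Qhat α) (Qhat β)) with hC
  have hC0 : ∀ α β, 0 ≤ C α β := fun α β => frobSq_nonneg _
  have hCdiag : ∀ α, C α α = 0 := by
    intro α
    have h : matComm (Qhat α) (Qhat α) = 0 := sub_self _
    show frobSq (matComm (Qhat α) (Qhat α)) = 0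
    rw [h]
    unfold frobSq
    simp
  have hCsym : ∀ α β, C α β = C β α := by
    intro α β
    show frobSq (matComm (Qhat α) (Qhat β)) = frobSq (matComm (Qhat β) (Qhat α))
    unfold frobSq matComm
    refine Finset.sum_congr rfl fun i _ => Finset.sum_congr rfl fun j _ => ?_
    rw [Matrix.sub_apply, Matrix.sub_apply]
    ring
  have hQnorm : ∀ β, frobSq (Qhat β) = 1 := by
    intro β
    rw [frobSq_eq_inner, horth β β, if_pos rfl]
  set t : ℝ := ∑ α, x α with ht
  have ht0 : 0 ≤ t := Finset.sum_nonneg fun α _ => hx α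
  show quadF C x ≤ t ^ 2
  rcases eq_or_lt_of_le ht0 with hteq | htpos
  · have hx0 : ∀ α, x α = 0 := by
      intro α
      exact (Finset.sum_eq_zero_iff_of_nonneg (fun β _ => hx β)).mp hteq.symm α
        (Finset.mem_univ α)
    have hz : quadF C x = 0 := by
      unfold quadF
      refine Finset.sum_eq_zero fun α _ => Finset.sum_eq_zero fun β _ => ?_
      rw [hx0]
      ring
    rw [hz]
    positivity
  · -- compactness and maximizer
    set S : Set (Fin (n * (n + 1) / 2) → ℝ) := {y | (∀ α, 0 ≤ y α) ∧ ∑ α, y α = t} with hSdef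
    have hxS : x ∈ S := ⟨hx, rfl⟩
    have hSsub : S ⊆ Set.Icc (fun _ => (0:ℝ)) (fun _ => t) := by
      intro y hy
      constructor
      · intro α; exact hy.1 α
      · intro α
        calc y α ≤ ∑ β, y β :=
              Finset.single_le_sum (fun β _ => hy.1 β) (Finset.mem_univ α)
          _ = t := hy.2
    have hclosed : IsClosed S := by
      have h1 : IsClosed {y : Fin (n * (n + 1) / 2) → ℝ | ∀ α, 0 ≤ y α} := by
        have : {y : Fin (n * (n + 1) / 2) → ℝ | ∀ α, 0 ≤ y α}
            = ⋂ α, {y : Fin (n * (n + 1) / 2) → ℝ | 0 ≤ y α} := by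
          ext y; simp
        rw [this]
        exact isClosed_iInter fun α => isClosed_le continuous_const (continuous_apply α)
      have h2 : IsClosed {y : Fin (n * (n + 1) / 2) → ℝ | ∑ α, y α = t} :=
        isClosed_eq (continuous_finset_sum _ fun α _ => continuous_apply α) continuous_const
      exact IsClosed.inter h1 h2
    have hcomp : IsCompact S := IsCompact.of_isClosed_subset isCompact_Icc hclosed hSsub
    have hcont : ContinuousOn (quadF C) S := by
      refine Continuous.continuousOn ?_
      unfold quadF
      exact continuous_finset_sum _ fun α _ => continuous_finset_sum _ fun β _ =>
        ((continuous_apply α).mul (continuous_apply β)).mul continuous_const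
    obtain ⟨y, hyS, hymax⟩ := hcomp.exists_isMaxOn ⟨x, hxS⟩ hcont
    have hyS' : (∀ α, 0 ≤ y α) ∧ ∑ α, y α = t := hyS
    -- support
    set supp : Finset (Fin (n * (n + 1) / 2)) :=
      Finset.univ.filter (fun α => 0 < y α) with hsupp
    have hyzero : ∀ α, α ∉ supp → y α = 0 := by
      intro α hα
      by_contra h
      exact hα (Finset.mem_filter.mpr ⟨Finset.mem_univ α, lt_of_le_of_ne (hyS'.1 α)
        (fun e => h e.symm)⟩)
    have hsne : supp.Nonempty := by
      by_contra h
      rw [Finset.not_nonempty_iff_eq_empty] at h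
      have : ∑ α, y α = 0 := by
        refine Finset.sum_eq_zero fun α _ => hyzero α ?_
        rw [h]
        exact Finset.notMem_empty α
      rw [hyS'.2] at this
      linarith
    -- equal scores
    set g : Fin (n * (n + 1) / 2) → ℝ := fun γ => ∑ δ, C γ δ * y δ with hg
    have hscore : ∀ α β, 0 < y α → g β ≤ g α :=
      fun α β hα => score_le_of_max C hCsym hC0 t y hyS' (fun z hz => hymax hz) α β hα
    obtain ⟨δ₀, hδ₀⟩ := hsne
    have hδ₀pos : 0 < y δ₀ := (Finset.mem_filter.mp hδ₀).2
    set v : ℝ := g δ₀ with hv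
    have hgv : ∀ α, α ∈ supp → g α = v := by
      intro α hα
      exact le_antisymm (hscore δ₀ α hδ₀pos) (hscore α δ₀ (Finset.mem_filter.mp hα).2)
    -- F y = t * v
    have htsupp : ∑ α ∈ supp, y α = t := by
      rw [← hyS'.2]
      exact Finset.sum_subset (Finset.subset_univ supp) fun α _ hα => hyzero α hα
    have hFy : quadF C y = t * v := by
      have h1 : quadF C y = ∑ α, y α * g α := by
        unfold quadF
        refine Finset.sum_congr rfl fun α _ => ?_
        rw [hg]
        simp only
        rw [Finset.mul_sum]
        exact Finset.sum_congr rfl fun β _ => by ring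
      have h2 : ∑ α, y α * g α = ∑ α ∈ supp, y α * g α :=
        (Finset.sum_subset (Finset.subset_univ supp)
          fun α _ hα => by rw [hyzero α hα, zero_mul]).symm
      have h3 : ∑ α ∈ supp, y α * g α = ∑ α ∈ supp, y α * v :=
        Finset.sum_congr rfl fun α hα => by rw [hgv α hα]
      rw [h1, h2, h3, ← Finset.sum_mul, htsupp, mul_comm]
    -- row bounds via row_bound
    have hrow : ∀ β, β ∈ supp → ∑ α ∈ supp, C α β ≤ (supp.card : ℝ) := by
      intro β hβ
      have hsplit : ∑ α ∈ supp, C α β = ∑ α ∈ supp.erase β, C α β := by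
        rw [Finset.sum_erase_eq_sub hβ, hCdiag β, sub_zero]
      have hflip : ∑ α ∈ supp.erase β, C α β
          = ∑ α ∈ supp.erase β, frobSq (matComm (Qhat β) (Qhat α)) :=
        Finset.sum_congr rfl fun α _ => hCsym α β
      have hrb := row_bound (supp.erase β) (Qhat β) (hsymm β) (hQnorm β) Qhat
        (fun α _ => hsymm α) (fun α _ β' _ => horth α β')
      have hcard : ((supp.erase β).card : ℝ) = (supp.card : ℝ) - 1 := by
        rw [Finset.card_erase_of_mem hβ]
        have hpos : 1 ≤ supp.card := Finset.card_pos.mpr ⟨β, hβ⟩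
        rw [Nat.cast_sub hpos]
        norm_num
      rw [hsplit, hflip]
      rw [hcard] at hrb
      linarith
    -- v ≤ t
    have hvt : v ≤ t := by
      have hcardpos : (0:ℝ) < (supp.card : ℝ) := by
        have : 0 < supp.card := Finset.card_pos.mpr ⟨δ₀, hδ₀⟩
        exact_mod_cast this
      have hsv : (supp.card : ℝ) * v = ∑ α ∈ supp, g α := by
        rw [Finset.sum_congr rfl hgv, Finset.sum_const, nsmul_eq_mul]
      have hswap : ∑ α ∈ supp, g α = ∑ δ ∈ supp, y δ * ∑ α ∈ supp, C α δ := by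
        calc ∑ α ∈ supp, g α = ∑ α ∈ supp, ∑ δ, C α δ * y δ := rfl
          _ = ∑ δ, ∑ α ∈ supp, C α δ * y δ := Finset.sum_comm
          _ = ∑ δ, y δ * ∑ α ∈ supp, C α δ := by
              refine Finset.sum_congr rfl fun δ _ => ?_
              rw [Finset.mul_sum]
              exact Finset.sum_congr rfl fun α _ => by ring
          _ = ∑ δ ∈ supp, y δ * ∑ α ∈ supp, C α δ :=
              (Finset.sum_subset (Finset.subset_univ supp)
                fun δ _ hδ => by rw [hyzero δ hδ, zero_mul]).symm
      have hbound : ∑ δ ∈ supp, y δ * ∑ α ∈ supp, C α δ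
          ≤ ∑ δ ∈ supp, y δ * (supp.card : ℝ) := by
        refine Finset.sum_le_sum fun δ hδ => ?_
        exact mul_le_mul_of_nonneg_left (hrow δ hδ) (hyS'.1 δ)
      have hfinal : ∑ δ ∈ supp, y δ * (supp.card : ℝ) = t * (supp.card : ℝ) := by
        rw [← Finset.sum_mul, htsupp]
      have h5 : (supp.card : ℝ) * v ≤ t * (supp.card : ℝ) := by
        rw [hsv, hswap, ← hfinal]
        exact hbound
      nlinarith
    -- conclusion
    have hFx : quadF C x ≤ quadF C y := hymax hxS
    calc quadF C x ≤ quadF C y := hFx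
      _ = t * v := hFy
      _ ≤ t * t := mul_le_mul_of_nonneg_left hvt ht0
      _ = t ^ 2 := (sq t).symm
end

section
/- (A priori estimate) Let n ≥ 2, N = n(n+1)/2, let Q̂_1, ..., Q̂_N be an orthonormal basis (for the Frobenius inner product) of the space of real symmetric n×n matrices, and let ε > 0 with ε ≤ 1/N. Define f(x) = Σ_{α,β=1}^N x_α x_β ‖[Q̂_α, Q̂_β]‖² − (Σ_{α=1}^N x_α)² and Δ_ε = { x ∈ ℝ^N : Σ_α x_α = 1 and x_α ≥ ε for all α }. If f(x) ≤ 0 for every x ∈ Δ_ε, then f(x) < 0 for every x ∈ Δ_ε. -/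
open Matrix BigOperators

lemma frobSq_nonneg {n : ℕ} (A : Matrix (Fin n) (Fin n) ℝ) : 0 ≤ frobSq A :=
  Finset.sum_nonneg fun _ _ => Finset.sum_nonneg fun _ _ => sq_nonneg _

lemma frobInner_self {n : ℕ} (A : Matrix (Fin n) (Fin n) ℝ) : frobInner A A = frobSq A := by
  simp [frobInner, frobSq, sq]

lemma frobInner_comm {n : ℕ} (A B : Matrix (Fin n) (Fin n) ℝ) : frobInner A B = frobInner B A := by
  simp [frobInner, mul_comm]

lemma frobSq_neg {n : ℕ} (A : Matrix (Fin n) (Fin n) ℝ) : frobSq (-A) = frobSq A := by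
  simp [frobSq]

lemma matComm_comm {n : ℕ} (A B : Matrix (Fin n) (Fin n) ℝ) : matComm A B = -(matComm B A) := by
  simp [matComm]

lemma frobSq_matComm_comm {n : ℕ} (A B : Matrix (Fin n) (Fin n) ℝ) :
    frobSq (matComm A B) = frobSq (matComm B A) := by
  rw [matComm_comm, frobSq_neg]

lemma frobSq_matComm_self {n : ℕ} (A : Matrix (Fin n) (Fin n) ℝ) : frobSq (matComm A A) = 0 := by
  simp [matComm, frobSq]

lemma frobSq_eq_trace {n : ℕ} (X : Matrix (Fin n) (Fin n) ℝ) :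
    frobSq X = Matrix.trace (Xᵀ * X) := by
  simp only [frobSq, Matrix.trace, Matrix.diag, Matrix.mul_apply, Matrix.transpose_apply, sq]
  rw [Finset.sum_comm]

lemma frobSq_conj {n : ℕ} {U : Matrix (Fin n) (Fin n) ℝ} (hU : Uᵀ * U = 1)
    (X : Matrix (Fin n) (Fin n) ℝ) : frobSq (U * X * Uᵀ) = frobSq X := by
  rw [frobSq_eq_trace, frobSq_eq_trace]
  have h1 : (U * X * Uᵀ)ᵀ * (U * X * Uᵀ) = U * (Xᵀ * X) * Uᵀ := by
    rw [Matrix.transpose_mul, Matrix.transpose_mul, Matrix.transpose_transpose]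
    calc Uᵀᵀ * (Xᵀ * Uᵀ) * (U * X * Uᵀ) = U * (Xᵀ * ((Uᵀ * U) * X)) * Uᵀ := by
          rw [Matrix.transpose_transpose]; noncomm_ring
    _ = U * (Xᵀ * X) * Uᵀ := by rw [hU, Matrix.one_mul]
  rw [h1, Matrix.trace_mul_comm (U * (Xᵀ * X)) Uᵀ, ← Matrix.mul_assoc, hU, Matrix.one_mul]

lemma frobSq_conj' {n : ℕ} {U : Matrix (Fin n) (Fin n) ℝ} (hU : U * Uᵀ = 1)
    (X : Matrix (Fin n) (Fin n) ℝ) : frobSq (Uᵀ * X * U) = frobSq X := by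
  have := frobSq_conj (U := Uᵀ) (by rwa [Matrix.transpose_transpose]) X
  rwa [Matrix.transpose_transpose] at this

lemma frobSq_diagonal {n : ℕ} (a : Fin n → ℝ) :
    frobSq (Matrix.diagonal a) = ∑ i, (a i) ^ 2 := by
  unfold frobSq
  apply Finset.sum_congr rfl
  intro i _
  rw [Finset.sum_eq_single i]
  · simp [Matrix.diagonal_apply_eq]
  · intro j _ hj; simp [Matrix.diagonal_apply_ne' a hj]
  · simp

lemma frobSq_matComm_diagonal {n : ℕ} (a : Fin n → ℝ) (C : Matrix (Fin n) (Fin n) ℝ) :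
    frobSq (matComm (Matrix.diagonal a) C) = ∑ i, ∑ j, (a i - a j) ^ 2 * (C i j) ^ 2 := by
  unfold frobSq matComm
  apply Finset.sum_congr rfl; intro i _
  apply Finset.sum_congr rfl; intro j _
  rw [Matrix.sub_apply, Matrix.diagonal_mul, Matrix.mul_diagonal]
  ring

lemma matComm_conj {n : ℕ} {U : Matrix (Fin n) (Fin n) ℝ} (hU1 : Uᵀ * U = 1)
    (hU2 : U * Uᵀ = 1) (X G : Matrix (Fin n) (Fin n) ℝ) :
    matComm (U * X * Uᵀ) G = U * matComm X (Uᵀ * G * U) * Uᵀ := by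
  unfold matComm
  rw [Matrix.mul_sub, Matrix.sub_mul]
  congr 1
  · calc U * X * Uᵀ * G = U * (X * (Uᵀ * (G * (U * Uᵀ)))) := by rw [hU2, Matrix.mul_one]; noncomm_ring
    _ = U * (X * (Uᵀ * G * U)) * Uᵀ := by noncomm_ring
  · calc G * (U * X * Uᵀ) = (U * Uᵀ) * (G * (U * X * Uᵀ)) := by rw [hU2, Matrix.one_mul]
    _ = U * (Uᵀ * G * U * X) * Uᵀ := by noncomm_ring

lemma ite_sum_pick {m : ℕ} (x y : Fin m) :
    ∑ i, (if i = x then (1:ℝ) else 0) * (if i = y then 1 else 0)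
      = if x = y then (1:ℝ) else 0 := by
  by_cases h : x = y
  · subst h; simp
  · rw [if_neg h]
    apply Finset.sum_eq_zero
    intro i _
    by_cases hx : i = x
    · subst hx; simp [h]
    · simp [hx]

lemma abs_iota_le {m : ℕ} (p q : Fin m × Fin m) :
    |(if p.1 = q.1 then (1:ℝ) else 0) - (if p.1 = q.2 then 1 else 0)
      - (if p.2 = q.1 then 1 else 0) + (if p.2 = q.2 then 1 else 0)|
    ≤ 1 + (if q = p then (1:ℝ) else 0) + (if q = (p.2, p.1) then 1 else 0) := by
  rcases p with ⟨p1, p2⟩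
  rcases q with ⟨q1, q2⟩
  simp only [Prod.mk.injEq]
  by_cases h1 : p1 = q1 <;> by_cases h2 : p1 = q2 <;> by_cases h3 : p2 = q1 <;>
    by_cases h4 : p2 = q2 <;>
    simp_all [abs_le, eq_comm] <;> norm_num

lemma gap_bound {m : ℕ} (w : Fin m → Fin m → ℝ) (a : Fin m → ℝ) (μ W : ℝ)
    (hμ0 : 0 ≤ μ) (hW0 : 0 ≤ W)
    (hsym : ∀ i j, w i j = w j i) (hnn : ∀ i j, 0 ≤ w i j)
    (hμ : ∀ i j, w i j ≤ μ) (hW : ∑ i, ∑ j, w i j ≤ W) :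
    ∑ i, ∑ j, w i j * (a i - a j) ^ 2 ≤ (W + 2 * μ) * ∑ i, (a i) ^ 2 := by
  classical
  set Q : ℝ := ∑ i, ∑ j, w i j * (a i - a j) ^ 2 with hQdef
  set v : Fin m → Fin m → ℝ := fun i j => Real.sqrt (w i j) * (a i - a j) with hv
  set z : Fin m → ℝ := fun i => ∑ j, w i j * (a i - a j) with hzdef
  have hQ0 : 0 ≤ Q := Finset.sum_nonneg fun i _ => Finset.sum_nonneg fun j _ =>
    mul_nonneg (hnn i j) (sq_nonneg _)
  have hvsq : ∀ i j, (v i j) ^ 2 = w i j * (a i - a j) ^ 2 := by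
    intro i j; rw [hv]; simp only []; rw [mul_pow, Real.sq_sqrt (hnn i j)]
  have hQv : Q = ∑ i, ∑ j, (v i j) ^ 2 := by
    rw [hQdef]
    exact (Finset.sum_congr rfl fun i _ => Finset.sum_congr rfl fun j _ => (hvsq i j).symm)
  have hvanti : ∀ i j, v j i = -(v i j) := by
    intro i j; rw [hv]; simp only []; rw [hsym j i]; ring
  have hQz : Q = 2 * ∑ i, a i * z i := by
    have h1 : Q = (∑ i, ∑ j, w i j * (a i - a j) * a i) - ∑ i, ∑ j, w i j * (a i - a j) * a j := by
      rw [hQdef, ← Finset.sum_sub_distrib]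
      apply Finset.sum_congr rfl; intro i _
      rw [← Finset.sum_sub_distrib]
      apply Finset.sum_congr rfl; intro j _; ring
    have h2 : (∑ i, ∑ j, w i j * (a i - a j) * a j)
        = -∑ i, ∑ j, w i j * (a i - a j) * a i := by
      rw [Finset.sum_comm, ← Finset.sum_neg_distrib]
      apply Finset.sum_congr rfl; intro j _
      rw [← Finset.sum_neg_distrib]
      apply Finset.sum_congr rfl; intro i _
      rw [hsym]; ring
    have h3 : ∀ i : Fin m, a i * z i = ∑ j, w i j * (a i - a j) * a i := by
      intro i; rw [hzdef]; simp only []; rw [Finset.mul_sum]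
      exact Finset.sum_congr rfl fun j _ => by ring
    rw [h1, h2]
    simp only [h3]
    ring
  set wq : Fin m × Fin m → ℝ := fun p => w p.1 p.2 with hwq
  set V : Fin m × Fin m → ℝ := fun p => v p.1 p.2 with hV
  set col : Fin m × Fin m → Fin m → ℝ :=
    fun p i => Real.sqrt (wq p) * ((if i = p.1 then (1:ℝ) else 0) - (if i = p.2 then 1 else 0))
    with hcol
  have hVQ : ∑ p, (V p) ^ 2 = Q := by
    rw [hQv, Fintype.sum_prod_type]
  have hwqsum : ∑ p, wq p ≤ W := by
    rw [Fintype.sum_prod_type]; exact hW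
  have hswapQ : ∑ p : Fin m × Fin m, (V (p.2, p.1)) ^ 2 = Q := by
    rw [Fintype.sum_prod_type, Finset.sum_comm, hQv]
  have hsqv : ∀ i j, Real.sqrt (w i j) * v i j = w i j * (a i - a j) := by
    intro i j; rw [hv]; simp only []; rw [← mul_assoc, Real.mul_self_sqrt (hnn i j)]
  have hcol2z : ∀ i, ∑ p, V p * col p i = 2 * z i := by
    intro i
    rw [Fintype.sum_prod_type]
    have e1 : ∀ (j k : Fin m), V (j, k) * col (j, k) i
        = (if i = j then (1:ℝ) else 0) * (Real.sqrt (w j k) * v j k)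
          - (if i = k then (1:ℝ) else 0) * (Real.sqrt (w j k) * v j k) := by
      intro j k; simp only [hV, hcol, hwq]; ring
    simp only [e1]
    simp only [Finset.sum_sub_distrib]
    have e2 : (∑ j, ∑ k, (if i = j then (1:ℝ) else 0) * (Real.sqrt (w j k) * v j k)) = z i := by
      have e21 : ∀ j : Fin m, (∑ k, (if i = j then (1:ℝ) else 0) * (Real.sqrt (w j k) * v j k))
          = if i = j then (∑ k, Real.sqrt (w j k) * v j k) else 0 := by
        intro j; by_cases h : i = j <;> simp [h]
      simp only [e21]
      rw [Finset.sum_ite_eq]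
      simp only [Finset.mem_univ, if_true]
      rw [hzdef]
      exact Finset.sum_congr rfl fun k _ => hsqv i k
    have e3 : (∑ j, ∑ k, (if i = k then (1:ℝ) else 0) * (Real.sqrt (w j k) * v j k)) = -z i := by
      rw [Finset.sum_comm]
      have e31 : ∀ k : Fin m, (∑ j, (if i = k then (1:ℝ) else 0) * (Real.sqrt (w j k) * v j k))
          = if i = k then (∑ j, Real.sqrt (w j k) * v j k) else 0 := by
        intro k; by_cases h : i = k <;> simp [h]
      simp only [e31]
      rw [Finset.sum_ite_eq]
      simp only [Finset.mem_univ, if_true]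
      rw [hzdef, ← Finset.sum_neg_distrib]
      apply Finset.sum_congr rfl; intro j _
      calc Real.sqrt (w j i) * v j i = Real.sqrt (w i j) * (-(v i j)) := by
            rw [hsym j i, hvanti i j]
      _ = -(Real.sqrt (w i j) * v i j) := by ring
      _ = -(w i j * (a i - a j)) := by rw [hsqv i j]
    rw [e2, e3]
    ring
  have hgram : ∀ p q : Fin m × Fin m, (∑ i, col p i * col q i)
      = Real.sqrt (wq p) * Real.sqrt (wq q) *
        ((if p.1 = q.1 then (1:ℝ) else 0) - (if p.1 = q.2 then 1 else 0)
          - (if p.2 = q.1 then 1 else 0) + (if p.2 = q.2 then 1 else 0)) := by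
    intro p q
    have e : ∀ i, col p i * col q i = Real.sqrt (wq p) * Real.sqrt (wq q) *
        ((if i = p.1 then (1:ℝ) else 0) * (if i = q.1 then 1 else 0)
          - (if i = p.1 then (1:ℝ) else 0) * (if i = q.2 then 1 else 0)
          - (if i = p.2 then (1:ℝ) else 0) * (if i = q.1 then 1 else 0)
          + (if i = p.2 then (1:ℝ) else 0) * (if i = q.2 then 1 else 0)) := by
      intro i; simp only [hcol]; ring
    simp only [e]
    rw [← Finset.mul_sum]
    congr 1
    rw [Finset.sum_add_distrib, Finset.sum_sub_distrib, Finset.sum_sub_distrib,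
      ite_sum_pick, ite_sum_pick, ite_sum_pick, ite_sum_pick]
  have hBv : ∑ i, (2 * z i) ^ 2 = ∑ p, ∑ q, V p * V q * (∑ i, col p i * col q i) := by
    have e : ∀ i, (2 * z i) ^ 2 = ∑ p, ∑ q, (V p * col p i) * (V q * col q i) := by
      intro i; rw [← hcol2z i, sq, Finset.sum_mul_sum]
    simp only [e]
    rw [Finset.sum_comm]
    apply Finset.sum_congr rfl; intro p _
    rw [Finset.sum_comm]
    apply Finset.sum_congr rfl; intro q _
    rw [Finset.mul_sum]
    exact Finset.sum_congr rfl fun i _ => by ring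
  have hsqrt_le : ∀ p q : Fin m × Fin m, Real.sqrt (wq p) * Real.sqrt (wq q) ≤ μ := by
    intro p q
    calc Real.sqrt (wq p) * Real.sqrt (wq q) ≤ Real.sqrt μ * Real.sqrt μ := by
          apply mul_le_mul (Real.sqrt_le_sqrt (hμ _ _)) (Real.sqrt_le_sqrt (hμ _ _))
            (Real.sqrt_nonneg _) (Real.sqrt_nonneg _)
    _ = μ := Real.mul_self_sqrt hμ0
  have hptw : ∀ p q : Fin m × Fin m, V p * V q * (∑ i, col p i * col q i)
      ≤ Real.sqrt (wq p) * |V p| * (Real.sqrt (wq q) * |V q|)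
        + (if q = p then (1:ℝ) else 0) * (Real.sqrt (wq p) * Real.sqrt (wq q) * (|V p| * |V q|))
        + (if q = (p.2, p.1) then (1:ℝ) else 0)
            * (Real.sqrt (wq p) * Real.sqrt (wq q) * (|V p| * |V q|)) := by
    intro p q
    rw [hgram p q]
    set ι : ℝ := (if p.1 = q.1 then (1:ℝ) else 0) - (if p.1 = q.2 then 1 else 0)
      - (if p.2 = q.1 then 1 else 0) + (if p.2 = q.2 then 1 else 0) with hι
    have hι_le : |ι| ≤ 1 + (if q = p then (1:ℝ) else 0) + (if q = (p.2, p.1) then 1 else 0) :=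
      abs_iota_le p q
    have hsnn : 0 ≤ Real.sqrt (wq p) * Real.sqrt (wq q) :=
      mul_nonneg (Real.sqrt_nonneg _) (Real.sqrt_nonneg _)
    have step1 : V p * V q * (Real.sqrt (wq p) * Real.sqrt (wq q) * ι)
        ≤ Real.sqrt (wq p) * Real.sqrt (wq q) * (|V p| * |V q| * |ι|) := by
      have : V p * V q * (Real.sqrt (wq p) * Real.sqrt (wq q) * ι)
          = Real.sqrt (wq p) * Real.sqrt (wq q) * (V p * V q * ι) := by ring
      rw [this]
      apply mul_le_mul_of_nonneg_left _ hsnn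
      calc V p * V q * ι ≤ |V p * V q * ι| := le_abs_self _
      _ = |V p| * |V q| * |ι| := by rw [abs_mul, abs_mul]
    have step2 : Real.sqrt (wq p) * Real.sqrt (wq q) * (|V p| * |V q| * |ι|)
        ≤ Real.sqrt (wq p) * Real.sqrt (wq q) *
          (|V p| * |V q| * (1 + (if q = p then (1:ℝ) else 0) + (if q = (p.2, p.1) then 1 else 0))) := by
      apply mul_le_mul_of_nonneg_left _ hsnn
      exact mul_le_mul_of_nonneg_left hι_le (mul_nonneg (abs_nonneg _) (abs_nonneg _))
    refine le_trans (le_trans step1 step2) (le_of_eq ?_)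
    ring
  have hT1 : ∑ p : Fin m × Fin m, ∑ q : Fin m × Fin m,
      Real.sqrt (wq p) * |V p| * (Real.sqrt (wq q) * |V q|) ≤ W * Q := by
    have e : ∑ p : Fin m × Fin m, ∑ q : Fin m × Fin m,
        Real.sqrt (wq p) * |V p| * (Real.sqrt (wq q) * |V q|)
        = (∑ p, Real.sqrt (wq p) * |V p|) ^ 2 := by
      rw [sq, Finset.sum_mul_sum]
    rw [e]
    have hcs := Finset.sum_mul_sq_le_sq_mul_sq Finset.univ
      (fun p : Fin m × Fin m => Real.sqrt (wq p)) (fun p => |V p|)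
    have e2 : ∑ p : Fin m × Fin m, (Real.sqrt (wq p)) ^ 2 = ∑ p, wq p := by
      apply Finset.sum_congr rfl; intro p _
      exact Real.sq_sqrt (hnn p.1 p.2)
    have e3 : ∑ p : Fin m × Fin m, |V p| ^ 2 = Q := by
      rw [← hVQ]
      exact Finset.sum_congr rfl fun p _ => sq_abs _
    rw [e2, e3] at hcs
    calc (∑ p, Real.sqrt (wq p) * |V p|) ^ 2 ≤ (∑ p, wq p) * Q := hcs
    _ ≤ W * Q := mul_le_mul_of_nonneg_right hwqsum hQ0
  have hT2 : ∑ p : Fin m × Fin m, ∑ q : Fin m × Fin m,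
      (if q = p then (1:ℝ) else 0) * (Real.sqrt (wq p) * Real.sqrt (wq q) * (|V p| * |V q|))
      ≤ μ * Q := by
    have e : ∀ p : Fin m × Fin m, (∑ q : Fin m × Fin m,
        (if q = p then (1:ℝ) else 0) * (Real.sqrt (wq p) * Real.sqrt (wq q) * (|V p| * |V q|)))
        = wq p * (V p) ^ 2 := by
      intro p
      have e1 : ∀ q : Fin m × Fin m, (if q = p then (1:ℝ) else 0)
          * (Real.sqrt (wq p) * Real.sqrt (wq q) * (|V p| * |V q|))
          = if q = p then (Real.sqrt (wq p) * Real.sqrt (wq q) * (|V p| * |V q|)) else 0 := by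
        intro q; by_cases h : q = p <;> simp [h]
      simp only [e1]
      rw [Finset.sum_ite_eq']
      simp only [Finset.mem_univ, if_true]
      rw [Real.mul_self_sqrt (hnn p.1 p.2), abs_mul_abs_self, ← sq]
    simp only [e]
    calc ∑ p : Fin m × Fin m, wq p * (V p) ^ 2 ≤ ∑ p : Fin m × Fin m, μ * (V p) ^ 2 :=
          Finset.sum_le_sum fun p _ => mul_le_mul_of_nonneg_right (hμ p.1 p.2) (sq_nonneg _)
    _ = μ * Q := by rw [← Finset.mul_sum, hVQ]
  have hT3 : ∑ p : Fin m × Fin m, ∑ q : Fin m × Fin m,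
      (if q = (p.2, p.1) then (1:ℝ) else 0)
        * (Real.sqrt (wq p) * Real.sqrt (wq q) * (|V p| * |V q|))
      ≤ μ * Q := by
    have e : ∀ p : Fin m × Fin m, (∑ q : Fin m × Fin m,
        (if q = (p.2, p.1) then (1:ℝ) else 0)
          * (Real.sqrt (wq p) * Real.sqrt (wq q) * (|V p| * |V q|)))
        = Real.sqrt (wq p) * Real.sqrt (wq (p.2, p.1)) * (|V p| * |V (p.2, p.1)|) := by
      intro p
      have e1 : ∀ q : Fin m × Fin m, (if q = (p.2, p.1) then (1:ℝ) else 0)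
          * (Real.sqrt (wq p) * Real.sqrt (wq q) * (|V p| * |V q|))
          = if q = (p.2, p.1) then
              (Real.sqrt (wq p) * Real.sqrt (wq q) * (|V p| * |V q|)) else 0 := by
        intro q; by_cases h : q = (p.2, p.1) <;> simp [h]
      simp only [e1]
      rw [Finset.sum_ite_eq']
      simp only [Finset.mem_univ, if_true]
    simp only [e]
    have bound : ∀ p : Fin m × Fin m,
        Real.sqrt (wq p) * Real.sqrt (wq (p.2, p.1)) * (|V p| * |V (p.2, p.1)|)
        ≤ μ * (((V p) ^ 2 + (V (p.2, p.1)) ^ 2) / 2) := by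
      intro p
      have h1 : |V p| * |V (p.2, p.1)| ≤ ((V p) ^ 2 + (V (p.2, p.1)) ^ 2) / 2 := by
        nlinarith [sq_nonneg (|V p| - |V (p.2, p.1)|), sq_abs (V p), sq_abs (V (p.2, p.1)),
          abs_nonneg (V p), abs_nonneg (V (p.2, p.1))]
      calc Real.sqrt (wq p) * Real.sqrt (wq (p.2, p.1)) * (|V p| * |V (p.2, p.1)|)
          ≤ μ * (|V p| * |V (p.2, p.1)|) :=
            mul_le_mul_of_nonneg_right (hsqrt_le _ _)
              (mul_nonneg (abs_nonneg _) (abs_nonneg _))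
      _ ≤ μ * (((V p) ^ 2 + (V (p.2, p.1)) ^ 2) / 2) :=
            mul_le_mul_of_nonneg_left h1 hμ0
    calc ∑ p : Fin m × Fin m,
        Real.sqrt (wq p) * Real.sqrt (wq (p.2, p.1)) * (|V p| * |V (p.2, p.1)|)
        ≤ ∑ p : Fin m × Fin m, μ * (((V p) ^ 2 + (V (p.2, p.1)) ^ 2) / 2) :=
          Finset.sum_le_sum fun p _ => bound p
    _ = μ * Q := by
        have : ∑ p : Fin m × Fin m, μ * (((V p) ^ 2 + (V (p.2, p.1)) ^ 2) / 2)
            = μ / 2 * ((∑ p : Fin m × Fin m, (V p) ^ 2)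
              + ∑ p : Fin m × Fin m, (V (p.2, p.1)) ^ 2) := by
          rw [← Finset.sum_add_distrib, Finset.mul_sum]
          exact Finset.sum_congr rfl fun p _ => by ring
        rw [this, hVQ, hswapQ]; ring
  have hkey : ∑ i, (2 * z i) ^ 2 ≤ (W + 2 * μ) * Q := by
    rw [hBv]
    have hstep : ∑ p : Fin m × Fin m, ∑ q : Fin m × Fin m, V p * V q * (∑ i, col p i * col q i)
        ≤ ∑ p : Fin m × Fin m, ∑ q : Fin m × Fin m,
          (Real.sqrt (wq p) * |V p| * (Real.sqrt (wq q) * |V q|)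
            + (if q = p then (1:ℝ) else 0)
                * (Real.sqrt (wq p) * Real.sqrt (wq q) * (|V p| * |V q|))
            + (if q = (p.2, p.1) then (1:ℝ) else 0)
                * (Real.sqrt (wq p) * Real.sqrt (wq q) * (|V p| * |V q|))) :=
      Finset.sum_le_sum fun p _ => Finset.sum_le_sum fun q _ => hptw p q
    refine le_trans hstep ?_
    rw [show (W + 2 * μ) * Q = W * Q + μ * Q + μ * Q by ring]
    simp only [Finset.sum_add_distrib]
    exact add_le_add (add_le_add hT1 hT2) hT3
  have h4z : ∑ i, (2 * z i) ^ 2 = 4 * ∑ i, (z i) ^ 2 := by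
    rw [Finset.mul_sum]
    exact Finset.sum_congr rfl fun i _ => by ring
  have hCS := Finset.sum_mul_sq_le_sq_mul_sq Finset.univ a z
  have hA0 : 0 ≤ ∑ i, (a i) ^ 2 := Finset.sum_nonneg fun i _ => sq_nonneg _
  rcases eq_or_lt_of_le hQ0 with hQeq | hQpos
  · rw [← hQeq]
    exact mul_nonneg (by linarith) hA0
  · have h5 : Q * Q ≤ ((W + 2 * μ) * ∑ i, (a i) ^ 2) * Q := by
      calc Q * Q = 4 * (∑ i, a i * z i) ^ 2 := by rw [hQz]; ring
      _ ≤ 4 * ((∑ i, (a i) ^ 2) * ∑ i, (z i) ^ 2) := by linarith [hCS]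
      _ = (∑ i, (a i) ^ 2) * (4 * ∑ i, (z i) ^ 2) := by ring
      _ ≤ (∑ i, (a i) ^ 2) * ((W + 2 * μ) * Q) :=
            mul_le_mul_of_nonneg_left (by rw [← h4z]; exact hkey) hA0
      _ = ((W + 2 * μ) * ∑ i, (a i) ^ 2) * Q := by ring
    exact le_of_mul_le_mul_right h5 hQpos

lemma frobInner_sum_smul {n N : ℕ} (c : Fin N → ℝ) (A : Fin N → Matrix (Fin n) (Fin n) ℝ)
    (B : Matrix (Fin n) (Fin n) ℝ) :
    frobInner (∑ α, c α • A α) B = ∑ α, c α * frobInner (A α) B := by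
  unfold frobInner
  have e : ∀ i j, (∑ α, c α • A α) i j * B i j = ∑ α, c α * (A α i j * B i j) := by
    intro i j
    rw [Matrix.sum_apply, Finset.sum_mul]
    exact Finset.sum_congr rfl fun α _ => by simp [Matrix.smul_apply]; ring
  simp only [e]
  have s1 : ∀ i : Fin n, (∑ j, ∑ α, c α * (A α i j * B i j))
      = ∑ α, ∑ j, c α * (A α i j * B i j) := fun i => Finset.sum_comm
  simp only [s1]
  rw [Finset.sum_comm]
  apply Finset.sum_congr rfl; intro α _
  rw [Finset.mul_sum]
  apply Finset.sum_congr rfl; intro i _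
  rw [Finset.mul_sum]

lemma parseval {n N : ℕ} (Qhat : Fin N → Matrix (Fin n) (Fin n) ℝ)
    (horth : ∀ α β, frobInner (Qhat α) (Qhat β) = if α = β then 1 else 0)
    (hspan : ∀ A : Matrix (Fin n) (Fin n) ℝ, Aᵀ = A → ∃ c : Fin N → ℝ, A = ∑ α, c α • Qhat α)
    (M : Matrix (Fin n) (Fin n) ℝ) (hM : Mᵀ = M) :
    ∑ α, (frobInner M (Qhat α)) ^ 2 = frobSq M := by
  obtain ⟨c, hc⟩ := hspan M hM
  have hcoef : ∀ β, frobInner M (Qhat β) = c β := by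
    intro β
    rw [hc, frobInner_sum_smul]
    have e : ∀ α, c α * frobInner (Qhat α) (Qhat β) = if α = β then c α else 0 := by
      intro α; rw [horth]; by_cases h : α = β <;> simp [h]
    simp only [e]
    rw [Finset.sum_ite_eq']
    simp
  have h2 : frobSq M = ∑ α, c α * c α := by
    calc frobSq M = frobInner M M := (frobInner_self M).symm
    _ = frobInner (∑ α, c α • Qhat α) M := by rw [← hc]
    _ = ∑ α, c α * frobInner (Qhat α) M := frobInner_sum_smul c Qhat M
    _ = ∑ α, c α * c α := by
        apply Finset.sum_congr rfl; intro α _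
        rw [frobInner_comm, hcoef]
  rw [h2]
  apply Finset.sum_congr rfl; intro α _
  rw [hcoef, sq]

lemma exists_eigen {n : ℕ} (B : Matrix (Fin n) (Fin n) ℝ) (hB : Bᵀ = B) :
    ∃ (U : Matrix (Fin n) (Fin n) ℝ) (a : Fin n → ℝ),
      Uᵀ * U = 1 ∧ U * Uᵀ = 1 ∧ B = U * Matrix.diagonal a * Uᵀ := by
  have hH : B.IsHermitian := by
    rw [Matrix.IsHermitian]
    ext i j
    simp [Matrix.conjTranspose_apply]
    rw [← Matrix.transpose_apply B j i, hB]
  refine ⟨(hH.eigenvectorUnitary : Matrix (Fin n) (Fin n) ℝ), hH.eigenvalues, ?_, ?_, ?_⟩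
  · have := (Matrix.mem_unitaryGroup_iff').mp hH.eigenvectorUnitary.2
    simpa [Matrix.star_eq_conjTranspose, Matrix.conjTranspose_eq_transpose_of_trivial] using this
  · have := (Matrix.mem_unitaryGroup_iff).mp hH.eigenvectorUnitary.2
    simpa [Matrix.star_eq_conjTranspose, Matrix.conjTranspose_eq_transpose_of_trivial] using this
  · have h := hH.spectral_theorem
    simpa [Matrix.star_eq_conjTranspose, Matrix.conjTranspose_eq_transpose_of_trivial] using h


lemma conj_sq_sum {n N : ℕ} (Qhat : Fin N → Matrix (Fin n) (Fin n) ℝ)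
    (hsymm : ∀ α, (Qhat α)ᵀ = Qhat α)
    (horth : ∀ α β, frobInner (Qhat α) (Qhat β) = if α = β then 1 else 0)
    (hspan : ∀ A : Matrix (Fin n) (Fin n) ℝ, Aᵀ = A → ∃ c : Fin N → ℝ, A = ∑ α, c α • Qhat α)
    {U : Matrix (Fin n) (Fin n) ℝ} (hU1 : Uᵀ * U = 1)
    {i j : Fin n} (hij : i ≠ j) :
    ∑ α, ((Uᵀ * Qhat α * U) i j) ^ 2 = 1 / 2 := by
  classical
  set S : Matrix (Fin n) (Fin n) ℝ := Matrix.of fun k l => U k i * U l j + U k j * U l i with hS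
  have hSsym : Sᵀ = S := by
    ext k l
    simp only [hS, Matrix.transpose_apply, Matrix.of_apply]
    ring
  have hUcol : ∀ i' j' : Fin n, (∑ k, U k i' * U k j') = if i' = j' then (1:ℝ) else 0 := by
    intro i' j'
    have h := congrFun (congrFun hU1 i') j'
    simpa [Matrix.mul_apply, Matrix.transpose_apply, Matrix.one_apply] using h
  have hCapp : ∀ (Q : Matrix (Fin n) (Fin n) ℝ) (i' j' : Fin n),
      (Uᵀ * Q * U) i' j' = ∑ k, ∑ l, U k i' * Q k l * U l j' := by
    intro Q i' j'
    rw [Matrix.mul_apply]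
    rw [Finset.sum_comm]
    apply Finset.sum_congr rfl; intro k _
    rw [Matrix.mul_apply, Finset.sum_mul]
    apply Finset.sum_congr rfl; intro l _
    simp [Matrix.transpose_apply]
  have hQsym : ∀ (α : Fin N) (k l : Fin n), Qhat α l k = Qhat α k l := by
    intro α k l
    rw [← Matrix.transpose_apply (Qhat α) k l, hsymm α]
  have hCsym : ∀ α : Fin N, (Uᵀ * Qhat α * U) j i = (Uᵀ * Qhat α * U) i j := by
    intro α
    rw [hCapp, hCapp, Finset.sum_comm]
    apply Finset.sum_congr rfl; intro k _
    apply Finset.sum_congr rfl; intro l _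
    rw [hQsym α l k]
    ring
  have hSinner : ∀ α, frobInner S (Qhat α) = 2 * ((Uᵀ * Qhat α * U) i j) := by
    intro α
    unfold frobInner
    have e : ∀ k l : Fin n, S k l * Qhat α k l
        = U k i * Qhat α k l * U l j + U k j * Qhat α k l * U l i := by
      intro k l
      simp only [hS, Matrix.of_apply]
      ring
    simp only [e, Finset.sum_add_distrib]
    rw [← hCapp (Qhat α) i j, ← hCapp (Qhat α) j i, hCsym α]
    ring
  have hSfrob : frobSq S = 2 := by
    unfold frobSq
    have e : ∀ k l : Fin n, (S k l) ^ 2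
        = (U k i * U k i) * (U l j * U l j) + (U k j * U k j) * (U l i * U l i)
          + 2 * ((U k i * U k j) * (U l i * U l j)) := by
      intro k l
      simp only [hS, Matrix.of_apply]
      ring
    simp only [e, Finset.sum_add_distrib]
    have f1 : ∑ k, ∑ l, (U k i * U k i) * (U l j * U l j)
        = (∑ k, U k i * U k i) * (∑ l, U l j * U l j) := by
      rw [Finset.sum_mul_sum]
    have f2 : ∑ k, ∑ l, (U k j * U k j) * (U l i * U l i)
        = (∑ k, U k j * U k j) * (∑ l, U l i * U l i) := by
      rw [Finset.sum_mul_sum]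
    have f3 : ∑ k, ∑ l, 2 * ((U k i * U k j) * (U l i * U l j))
        = 2 * ((∑ k, U k i * U k j) * (∑ l, U l i * U l j)) := by
      rw [Finset.sum_mul_sum, Finset.mul_sum]
      apply Finset.sum_congr rfl; intro k _
      rw [Finset.mul_sum]
    rw [f1, f2, f3, hUcol i i, hUcol j j, hUcol i j]
    simp [hij]
    norm_num
  have hP := parseval Qhat horth hspan S hSsym
  rw [hSfrob] at hP
  have e4 : ∀ α, (frobInner S (Qhat α)) ^ 2 = 4 * ((Uᵀ * Qhat α * U) i j) ^ 2 := by
    intro α; rw [hSinner α]; ring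
  simp only [e4] at hP
  rw [← Finset.mul_sum] at hP
  linarith

lemma frobSq_unit {n N : ℕ} (Qhat : Fin N → Matrix (Fin n) (Fin n) ℝ)
    (horth : ∀ α β, frobInner (Qhat α) (Qhat β) = if α = β then 1 else 0) (β : Fin N) :
    frobSq (Qhat β) = 1 := by
  rw [← frobInner_self, horth]
  simp

lemma rowsum_le {n N : ℕ} (Qhat : Fin N → Matrix (Fin n) (Fin n) ℝ)
    (hsymm : ∀ α, (Qhat α)ᵀ = Qhat α)
    (horth : ∀ α β, frobInner (Qhat α) (Qhat β) = if α = β then 1 else 0)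
    (hspan : ∀ A : Matrix (Fin n) (Fin n) ℝ, Aᵀ = A → ∃ c : Fin N → ℝ, A = ∑ α, c α • Qhat α)
    (β : Fin N) :
    ∑ γ, frobSq (matComm (Qhat γ) (Qhat β)) ≤ (n : ℝ) := by
  classical
  obtain ⟨U, a, hU1, hU2, hBd⟩ := exists_eigen (Qhat β) (hsymm β)
  have ha2 : ∑ i, (a i) ^ 2 = 1 := by
    have h := frobSq_unit Qhat horth β
    rw [hBd, frobSq_conj hU1, frobSq_diagonal] at h
    exact h
  have hkey : ∀ γ, frobSq (matComm (Qhat γ) (Qhat β))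
      = ∑ i, ∑ j, (a i - a j) ^ 2 * ((Uᵀ * Qhat γ * U) i j) ^ 2 := by
    intro γ
    rw [frobSq_matComm_comm, hBd, matComm_conj hU1 hU2, frobSq_conj hU1,
      frobSq_matComm_diagonal]
  simp only [hkey]
  have hswap : ∑ γ, ∑ i, ∑ j, (a i - a j) ^ 2 * ((Uᵀ * Qhat γ * U) i j) ^ 2
      = ∑ i, ∑ j, ∑ γ, (a i - a j) ^ 2 * ((Uᵀ * Qhat γ * U) i j) ^ 2 := by
    rw [Finset.sum_comm]
    apply Finset.sum_congr rfl; intro i _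
    rw [Finset.sum_comm]
  rw [hswap]
  have e : ∀ i j : Fin n, (∑ γ, (a i - a j) ^ 2 * ((Uᵀ * Qhat γ * U) i j) ^ 2)
      = (1 / 2) * (a i - a j) ^ 2 := by
    intro i j
    by_cases h : i = j
    · subst h; simp
    · rw [← Finset.mul_sum, conj_sq_sum Qhat hsymm horth hspan hU1 h]
      ring
  simp only [e]
  have hgap : ∑ i, ∑ j, (1 / 2 : ℝ) * (a i - a j) ^ 2
      = (n : ℝ) * (∑ i, (a i) ^ 2) - (∑ i, a i) ^ 2 := by
    have expand : ∀ i j : Fin n, (1 / 2 : ℝ) * (a i - a j) ^ 2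
        = ((1 / 2) * (a i) ^ 2 + (1 / 2) * (a j) ^ 2) - a i * a j := by
      intro i j; ring
    simp only [expand, Finset.sum_sub_distrib, Finset.sum_add_distrib]
    simp only [Finset.sum_const, Finset.card_univ, Fintype.card_fin, nsmul_eq_mul,
      ← Finset.sum_mul, ← Finset.mul_sum]
    rw [sq (∑ i, a i)]
    ring
  rw [hgap, ha2]
  nlinarith [sq_nonneg (∑ i, a i)]

lemma dsum_le_one {n N : ℕ} (Qhat : Fin N → Matrix (Fin n) (Fin n) ℝ)
    (hsymm : ∀ α, (Qhat α)ᵀ = Qhat α)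
    (horth : ∀ α β, frobInner (Qhat α) (Qhat β) = if α = β then 1 else 0)
    (hspan : ∀ A : Matrix (Fin n) (Fin n) ℝ, Aᵀ = A → ∃ c : Fin N → ℝ, A = ∑ α, c α • Qhat α)
    (x : Fin N → ℝ) (b : Fin N) (hx0 : ∀ α, 0 ≤ x α) (hxs : ∑ α, x α = 1)
    (hmax : ∀ α, x α ≤ x b) :
    ∑ γ, x γ * frobSq (matComm (Qhat b) (Qhat γ)) ≤ 1 := by
  classical
  obtain ⟨U, a, hU1, hU2, hBd⟩ := exists_eigen (Qhat b) (hsymm b)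
  have ha2 : ∑ i, (a i) ^ 2 = 1 := by
    have h := frobSq_unit Qhat horth b
    rw [hBd, frobSq_conj hU1, frobSq_diagonal] at h
    exact h
  set C : Fin N → Matrix (Fin n) (Fin n) ℝ := fun γ => Uᵀ * Qhat γ * U with hC
  have hkey : ∀ γ, frobSq (matComm (Qhat b) (Qhat γ))
      = ∑ i, ∑ j, (a i - a j) ^ 2 * (C γ i j) ^ 2 := by
    intro γ
    rw [hBd, matComm_conj hU1 hU2, frobSq_conj hU1, frobSq_matComm_diagonal]
  have hCb : C b = Matrix.diagonal a := by
    rw [hC]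
    simp only []
    rw [hBd]
    calc Uᵀ * (U * Matrix.diagonal a * Uᵀ) * U
        = (Uᵀ * U) * Matrix.diagonal a * (Uᵀ * U) := by noncomm_ring
    _ = Matrix.diagonal a := by rw [hU1, Matrix.one_mul, Matrix.mul_one]
  have hfrobC : ∀ γ, frobSq (C γ) = 1 := by
    intro γ
    rw [hC]
    simp only []
    rw [frobSq_conj' hU2]
    exact frobSq_unit Qhat horth γ
  have hCsym2 : ∀ γ (i j : Fin n), C γ j i = C γ i j := by
    intro γ i j
    have h1 : (C γ)ᵀ = C γ := by
      rw [hC]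
      simp only []
      rw [Matrix.transpose_mul, Matrix.transpose_mul, Matrix.transpose_transpose, hsymm γ,
        Matrix.mul_assoc]
    rw [← Matrix.transpose_apply (C γ) i j, h1]
  set w : Fin n → Fin n → ℝ :=
    fun i j => if i = j then 0 else ∑ γ, x γ * (C γ i j) ^ 2 with hw
  have hLHS : ∑ γ, x γ * frobSq (matComm (Qhat b) (Qhat γ))
      = ∑ i, ∑ j, w i j * (a i - a j) ^ 2 := by
    simp only [hkey]
    have h1 : ∀ γ, x γ * (∑ i, ∑ j, (a i - a j) ^ 2 * (C γ i j) ^ 2)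
        = ∑ i, ∑ j, x γ * ((a i - a j) ^ 2 * (C γ i j) ^ 2) := by
      intro γ
      rw [Finset.mul_sum]
      apply Finset.sum_congr rfl; intro i _
      rw [Finset.mul_sum]
    simp only [h1]
    have h2 : ∑ γ, ∑ i, ∑ j, x γ * ((a i - a j) ^ 2 * (C γ i j) ^ 2)
        = ∑ i, ∑ j, ∑ γ, x γ * ((a i - a j) ^ 2 * (C γ i j) ^ 2) := by
      rw [Finset.sum_comm]
      apply Finset.sum_congr rfl; intro i _
      rw [Finset.sum_comm]
    rw [h2]
    apply Finset.sum_congr rfl; intro i _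
    apply Finset.sum_congr rfl; intro j _
    rw [hw]
    simp only []
    by_cases h : i = j
    · subst h; simp
    · rw [if_neg h, Finset.sum_mul]
      apply Finset.sum_congr rfl; intro γ _
      ring
  rw [hLHS]
  have hxb1 : x b ≤ 1 := by
    rw [← hxs]
    exact Finset.single_le_sum (fun α _ => hx0 α) (Finset.mem_univ b)
  have happ := gap_bound w a (x b * (1 / 2)) (1 - x b)
    (by have := hx0 b; linarith) (by linarith)
    (fun i j => ?_) (fun i j => ?_) (fun i j => ?_) ?_
  · calc ∑ i, ∑ j, w i j * (a i - a j) ^ 2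
        ≤ ((1 - x b) + 2 * (x b * (1 / 2))) * ∑ i, (a i) ^ 2 := happ
    _ = 1 := by rw [ha2]; ring
  · -- symmetry
    rw [hw]
    simp only []
    by_cases h : i = j
    · subst h; simp
    · rw [if_neg h, if_neg (Ne.symm h)]
      apply Finset.sum_congr rfl; intro γ _
      rw [hCsym2 γ i j]
  · -- nonneg
    rw [hw]
    simp only []
    by_cases h : i = j
    · simp [h]
    · rw [if_neg h]
      exact Finset.sum_nonneg fun γ _ => mul_nonneg (hx0 γ) (sq_nonneg _)
  · -- ≤ μ
    rw [hw]
    simp only []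
    by_cases h : i = j
    · simp only [if_pos h]
      have := hx0 b; linarith
    · rw [if_neg h]
      calc ∑ γ, x γ * (C γ i j) ^ 2 ≤ ∑ γ, x b * (C γ i j) ^ 2 :=
            Finset.sum_le_sum fun γ _ => mul_le_mul_of_nonneg_right (hmax γ) (sq_nonneg _)
      _ = x b * ∑ γ, (C γ i j) ^ 2 := by rw [Finset.mul_sum]
      _ = x b * (1 / 2) := by rw [conj_sq_sum Qhat hsymm horth hspan hU1 h]
  · -- total weight
    have hsw : ∑ i, ∑ j, w i j
        = ∑ γ, x γ * (∑ i, ∑ j, if i = j then 0 else (C γ i j) ^ 2) := by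
      have h1 : ∀ i j : Fin n, w i j = ∑ γ, x γ * (if i = j then 0 else (C γ i j) ^ 2) := by
        intro i j
        rw [hw]
        simp only []
        by_cases h : i = j
        · simp [h]
        · rw [if_neg h]
          apply Finset.sum_congr rfl; intro γ _
          rw [if_neg h]
      simp only [h1]
      have h2 : ∑ γ, ∑ i, ∑ j, x γ * (if i = j then 0 else (C γ i j) ^ 2)
          = ∑ i, ∑ j, ∑ γ, x γ * (if i = j then 0 else (C γ i j) ^ 2) := by
        rw [Finset.sum_comm]
        apply Finset.sum_congr rfl; intro i _
        rw [Finset.sum_comm]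
      rw [← h2]
      apply Finset.sum_congr rfl; intro γ _
      rw [Finset.mul_sum]
      apply Finset.sum_congr rfl; intro i _
      rw [Finset.mul_sum]
    rw [hsw]
    set D2 : Fin N → ℝ := fun γ => ∑ i, ∑ j, if i = j then 0 else (C γ i j) ^ 2 with hD2
    have hD2b : D2 b = 0 := by
      rw [hD2]
      simp only []
      apply Finset.sum_eq_zero; intro i _
      apply Finset.sum_eq_zero; intro j _
      by_cases h : i = j
      · simp [h]
      · rw [if_neg h, hCb, Matrix.diagonal_apply_ne a h]
        simp
    have hD2le : ∀ γ, D2 γ ≤ 1 := by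
      intro γ
      rw [hD2]
      simp only []
      calc ∑ i, ∑ j, (if i = j then 0 else (C γ i j) ^ 2)
          ≤ ∑ i, ∑ j, (C γ i j) ^ 2 := by
            apply Finset.sum_le_sum; intro i _
            apply Finset.sum_le_sum; intro j _
            by_cases h : i = j
            · simp [h]; positivity
            · rw [if_neg h]
      _ = frobSq (C γ) := rfl
      _ = 1 := hfrobC γ
    have hsplit : ∑ γ, x γ * D2 γ = (∑ γ ∈ Finset.univ.erase b, x γ * D2 γ) + x b * D2 b := by
      rw [Finset.sum_erase_add Finset.univ _ (Finset.mem_univ b)]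
    rw [hsplit, hD2b, mul_zero, add_zero]
    calc ∑ γ ∈ Finset.univ.erase b, x γ * D2 γ
        ≤ ∑ γ ∈ Finset.univ.erase b, x γ := by
          apply Finset.sum_le_sum; intro γ _
          calc x γ * D2 γ ≤ x γ * 1 := by
                apply mul_le_mul_of_nonneg_left (hD2le γ) (hx0 γ)
          _ = x γ := mul_one _
    _ = 1 - x b := by
        rw [Finset.sum_erase_eq_sub (Finset.mem_univ b), hxs]

lemma le_zero_of_le_linear {A K : ℝ} (hK : 0 ≤ K) (h : ∀ t : ℝ, 0 < t → t ≤ 1 → A ≤ t * K) :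
    A ≤ 0 := by
  by_contra hA
  push_neg at hA
  have hden : (0:ℝ) < 2 * K + 1 := by linarith
  set t0 := min 1 (A / (2 * K + 1)) with ht0
  have ht0pos : 0 < t0 := lt_min (by norm_num) (div_pos hA hden)
  have ht0le : t0 ≤ 1 := min_le_left _ _
  have h1 := h t0 ht0pos ht0le
  have hle : t0 * K ≤ (A / (2 * K + 1)) * K :=
    mul_le_mul_of_nonneg_right (min_le_right _ _) hK
  have hBA : (A / (2 * K + 1)) * (2 * K + 1) = A := div_mul_cancel₀ A (ne_of_gt hden)
  nlinarith [div_pos hA hden]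

set_option maxHeartbeats 3200000 in
/-- The a priori estimate: if `f_Q ≤ 0` on `Δ_ε` then `f_Q < 0` on `Δ_ε`. -/
theorem ddvv_a_priori_estimate (n : ℕ) (hn : 2 ≤ n)
    (Qhat : Fin (n * (n + 1) / 2) → Matrix (Fin n) (Fin n) ℝ)
    (hsymm : ∀ α, (Qhat α)ᵀ = Qhat α)
    (horth : ∀ α β, frobInner (Qhat α) (Qhat β) = if α = β then 1 else 0)
    (hspan : ∀ A : Matrix (Fin n) (Fin n) ℝ, Aᵀ = A →
      ∃ c : Fin (n * (n + 1) / 2) → ℝ, A = ∑ α, c α • Qhat α)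
    (ε : ℝ) (hε : 0 < ε) (hεN : ε ≤ 1 / (n * (n + 1) / 2 : ℕ))
    (f : (Fin (n * (n + 1) / 2) → ℝ) → ℝ)
    (hf : ∀ x, f x =
      (∑ α, ∑ β, x α * x β * frobSq (matComm (Qhat α) (Qhat β))) - (∑ α, x α) ^ 2)
    (hneg : ∀ x : Fin (n * (n + 1) / 2) → ℝ,
      (∑ α, x α = 1 ∧ ∀ α, ε ≤ x α) → f x ≤ 0) :
    ∀ x : Fin (n * (n + 1) / 2) → ℝ,
      (∑ α, x α = 1 ∧ ∀ α, ε ≤ x α) → f x < 0 := by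
  classical
  intro x hx
  obtain ⟨hx1, hx2⟩ := hx
  by_contra hcon
  push_neg at hcon
  have hf0 : f x = 0 := le_antisymm (hneg x ⟨hx1, hx2⟩) hcon
  set c : Fin (n * (n + 1) / 2) → Fin (n * (n + 1) / 2) → ℝ :=
    fun α β => frobSq (matComm (Qhat α) (Qhat β)) with hc
  have hg1 : ∑ α, ∑ β, x α * x β * c α β = 1 := by
    have h := hf x
    rw [hf0, hx1] at h
    have : (0:ℝ) = (∑ α, ∑ β, x α * x β * c α β) - 1 := by
      rw [hc]; simpa using h
    linarith
  have hcsym : ∀ α β, c α β = c β α := fun α β => frobSq_matComm_comm _ _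
  have hcnn : ∀ α β, 0 ≤ c α β := fun α β => frobSq_nonneg _
  have hcdiag : ∀ α, c α α = 0 := fun α => frobSq_matComm_self _
  have hNnℕ : n < n * (n + 1) / 2 := by
    have hev : 2 ∣ n * (n + 1) := (Nat.even_mul_succ_self n).two_dvd
    have h2 : n * (n + 1) / 2 * 2 = n * (n + 1) := Nat.div_mul_cancel hev
    nlinarith [h2, hn]
  have hNn : (n : ℝ) < ((n * (n + 1) / 2 : ℕ) : ℝ) := by exact_mod_cast hNnℕ
  have hNR : (0:ℝ) < ((n * (n + 1) / 2 : ℕ) : ℝ) := by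
    have : 0 < n * (n + 1) / 2 := by omega
    exact_mod_cast this
  have hNε : ((n * (n + 1) / 2 : ℕ) : ℝ) * ε ≤ 1 := by
    calc ((n * (n + 1) / 2 : ℕ) : ℝ) * ε
        ≤ ((n * (n + 1) / 2 : ℕ) : ℝ) * (1 / ((n * (n + 1) / 2 : ℕ) : ℝ)) :=
          mul_le_mul_of_nonneg_left hεN (le_of_lt hNR)
    _ = 1 := by field_simp
  obtain ⟨b, _, hbmax⟩ := Finset.exists_max_image Finset.univ x
    ⟨⟨0, by omega⟩, Finset.mem_univ _⟩
  have hb : ∀ α, x α ≤ x b := fun α => hbmax α (Finset.mem_univ α)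
  set d : Fin (n * (n + 1) / 2) → ℝ := fun γ => ∑ β, x β * c γ β with hd
  have hgd : ∑ γ, x γ * d γ = 1 := by
    rw [← hg1]
    apply Finset.sum_congr rfl; intro γ _
    rw [hd]
    simp only []
    rw [Finset.mul_sum]
    apply Finset.sum_congr rfl; intro β _
    ring
  have hrow : ∀ β', ∑ γ, c γ β' ≤ (n:ℝ) := by
    intro β'
    have h := rowsum_le Qhat hsymm horth hspan β'
    rw [hc]
    exact h
  by_cases hxb : x b ≤ ε
  · -- all coordinates equal ε
    have hxall : ∀ α, x α = ε := fun α => le_antisymm (le_trans (hb α) hxb) (hx2 α)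
    have hsumε : ((n * (n + 1) / 2 : ℕ) : ℝ) * ε = 1 := by
      rw [← hx1]
      simp [hxall, Finset.sum_const, Finset.card_univ]
    have hub : (1:ℝ) ≤ ε ^ 2 * (((n * (n + 1) / 2 : ℕ) : ℝ) * n) := by
      rw [← hg1, Finset.sum_comm]
      have e : ∀ β, ∑ α, x α * x β * c α β ≤ ε ^ 2 * n := by
        intro β
        have e1 : ∀ α, x α * x β * c α β = ε ^ 2 * c α β := by
          intro α; rw [hxall α, hxall β]; ring
        simp only [e1]
        rw [← Finset.mul_sum]
        apply mul_le_mul_of_nonneg_left (hrow β) (by positivity)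
      calc ∑ β, ∑ α, x α * x β * c α β ≤ ∑ β : Fin (n * (n + 1) / 2), ε ^ 2 * (n:ℝ) :=
            Finset.sum_le_sum fun β _ => e β
      _ = ((n * (n + 1) / 2 : ℕ) : ℝ) * (ε ^ 2 * n) := by
            rw [Finset.sum_const, Finset.card_univ, Fintype.card_fin, nsmul_eq_mul]
      _ = ε ^ 2 * (((n * (n + 1) / 2 : ℕ) : ℝ) * n) := by ring
    have e1 : ε ^ 2 * (((n * (n + 1) / 2 : ℕ) : ℝ) * n)
        = (ε * ((n * (n + 1) / 2 : ℕ) : ℝ)) * (ε * n) := by ring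
    have e2 : ε * ((n * (n + 1) / 2 : ℕ) : ℝ) = 1 := by linarith [hsumε]
    rw [e1, e2, one_mul] at hub
    have h5 : ε * (n:ℝ) < ε * ((n * (n + 1) / 2 : ℕ) : ℝ) :=
      mul_lt_mul_of_pos_left hNn hε
    linarith
  · -- main case
    push_neg at hxb
    have hdmax : ∀ γ, d γ ≤ d b := by
      intro γ
      by_cases hγb : γ = b
      · subst hγb; exact le_refl _
      · set s := x b - ε with hs
        have hs0 : 0 < s := by rw [hs]; linarith
        have key : ∀ t : ℝ, 0 < t → t ≤ 1 → d γ - d b ≤ t * (s * c γ b) := by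
          intro t ht0 ht1
          set τ := t * s with hτ
          have hτ0 : 0 < τ := mul_pos ht0 hs0
          have hτs : τ ≤ s := by nlinarith
          set v : Fin (n * (n + 1) / 2) → ℝ :=
            fun δ => (if δ = γ then (1:ℝ) else 0) - (if δ = b then 1 else 0) with hv
          set y : Fin (n * (n + 1) / 2) → ℝ := fun δ => x δ + τ * v δ with hy
          have hvsum : ∑ δ, v δ = 0 := by
            rw [hv]
            simp [Finset.sum_sub_distrib, Finset.sum_ite_eq']
          have hysum : ∑ δ, y δ = 1 := by
            rw [hy]
            simp only [Finset.sum_add_distrib]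
            rw [← Finset.mul_sum, hvsum, hx1]
            ring
          have hyge : ∀ δ, ε ≤ y δ := by
            intro δ
            rw [hy, hv]
            simp only []
            by_cases h1 : δ = γ
            · rw [if_pos h1, if_neg (by rw [h1]; exact hγb)]
              have := hx2 δ
              nlinarith
            · by_cases h2 : δ = b
              · rw [if_neg h1, if_pos h2]
                have hxd : x δ = x b := by rw [h2]
                rw [hxd]
                have : x b - τ ≥ ε := by rw [hs] at hτs; linarith
                linarith
              · rw [if_neg h1, if_neg h2]
                have := hx2 δ
                linarith
          have hfy := hneg y ⟨hysum, hyge⟩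
          rw [hf y, hysum] at hfy
          have hvF : ∀ F : Fin (n * (n + 1) / 2) → ℝ, ∑ δ, v δ * F δ = F γ - F b := by
            intro F
            have e1 : ∀ δ, v δ * F δ
                = (if δ = γ then F δ else 0) - (if δ = b then F δ else 0) := by
              intro δ; rw [hv]
              by_cases h1 : δ = γ <;> by_cases h2 : δ = b
              · exact absurd (by rw [← h1]; exact h2) hγb
              · simp [h1, h2, hγb, Ne.symm hγb]
              · simp [h1, h2, hγb, Ne.symm hγb]
              · simp [h1, h2, hγb, Ne.symm hγb]
            simp only [e1, Finset.sum_sub_distrib, Finset.sum_ite_eq', Finset.mem_univ,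
              if_true]
          have hF' : ∀ δ, (∑ α, x α * c α δ) = d δ := by
            intro δ
            rw [hd]
            simp only []
            apply Finset.sum_congr rfl; intro α _
            rw [hcsym α δ]
          have hexp : ∑ α, ∑ β, y α * y β * c α β
              = 1 + 2 * τ * (d γ - d b) - 2 * τ ^ 2 * c γ b := by
            have e : ∀ α β, y α * y β * c α β
                = x α * x β * c α β + τ * (v α * (x β * c α β))
                  + τ * (v β * (x α * c α β)) + τ ^ 2 * (v α * (v β * c α β)) := by
              intro α β; rw [hy]; simp only []; ring
            simp only [e, Finset.sum_add_distrib]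
            have p2 : ∑ α, ∑ β, τ * (v α * (x β * c α β)) = τ * (d γ - d b) := by
              have e2 : ∀ α, (∑ β, τ * (v α * (x β * c α β))) = τ * (v α * d α) := by
                intro α
                have hdα : d α = ∑ β, x β * c α β := by rw [hd]
                calc ∑ β, τ * (v α * (x β * c α β))
                    = τ * (v α * ∑ β, x β * c α β) := by simp only [Finset.mul_sum]
                _ = τ * (v α * d α) := by rw [← hdα]
              simp only [e2]
              rw [← Finset.mul_sum]
              congr 1
              exact hvF d
            have p3 : ∑ α, ∑ β, τ * (v β * (x α * c α β)) = τ * (d γ - d b) := by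
              rw [Finset.sum_comm]
              have e2 : ∀ β, (∑ α, τ * (v β * (x α * c α β))) = τ * (v β * d β) := by
                intro β
                calc ∑ α, τ * (v β * (x α * c α β))
                    = τ * (v β * ∑ α, x α * c α β) := by simp only [Finset.mul_sum]
                _ = τ * (v β * d β) := by rw [hF' β]
              simp only [e2]
              rw [← Finset.mul_sum]
              congr 1
              exact hvF d
            have p4 : ∑ α, ∑ β, τ ^ 2 * (v α * (v β * c α β)) = τ ^ 2 * (-2 * c γ b) := by
              have e2 : ∀ α, (∑ β, τ ^ 2 * (v α * (v β * c α β)))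
                  = τ ^ 2 * (v α * (c α γ - c α b)) := by
                intro α
                have h5 : (∑ β, v β * c α β) = c α γ - c α b := hvF (fun β => c α β)
                calc ∑ β, τ ^ 2 * (v α * (v β * c α β))
                    = τ ^ 2 * (v α * ∑ β, v β * c α β) := by simp only [Finset.mul_sum]
                _ = τ ^ 2 * (v α * (c α γ - c α b)) := by rw [h5]
              simp only [e2]
              rw [← Finset.mul_sum]
              have h6 : (∑ α, v α * (c α γ - c α b)) = (c γ γ - c γ b) - (c b γ - c b b) :=
                hvF (fun δ => c δ γ - c δ b)
              rw [h6, hcdiag γ, hcdiag b, hcsym b γ]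
              ring
            rw [hg1, p2, p3, p4]
            ring
          have hfy2 : (∑ α, ∑ β, y α * y β * c α β) - 1 ^ 2 ≤ 0 := by
            simp only [hc]; exact hfy
          rw [hexp] at hfy2
          have h2 : 2 * τ * (d γ - d b) ≤ 2 * τ ^ 2 * c γ b := by nlinarith [hfy2]
          have h3 : d γ - d b ≤ τ * c γ b := by nlinarith [h2, hτ0]
          rw [hτ] at h3
          calc d γ - d b ≤ t * s * c γ b := h3
          _ = t * (s * c γ b) := by ring
        have hK0 : 0 ≤ s * c γ b := mul_nonneg hs0.le (hcnn γ b)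
        have hlim := le_zero_of_le_linear hK0 key
        linarith
    have hsumd : ∑ γ, d γ ≤ (n:ℝ) := by
      rw [hd]
      simp only []
      rw [Finset.sum_comm]
      have e : ∀ β, (∑ γ, x β * c γ β) = x β * ∑ γ, c γ β := by
        intro β; rw [Finset.mul_sum]
      simp only [e]
      calc ∑ β, x β * ∑ γ, c γ β ≤ ∑ β, x β * (n:ℝ) :=
            Finset.sum_le_sum fun β _ =>
              mul_le_mul_of_nonneg_left (hrow β) (le_trans hε.le (hx2 β))
      _ = (n:ℝ) := by rw [← Finset.sum_mul, hx1, one_mul]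
    have hdb1 : d b ≤ 1 := by
      have h := dsum_le_one Qhat hsymm horth hspan x b (fun α => le_trans hε.le (hx2 α)) hx1 hb
      rw [hd]
      simp only [hc]
      exact h
    have hsub : ∑ γ, (x γ - ε) = 1 - ((n * (n + 1) / 2 : ℕ) : ℝ) * ε := by
      rw [Finset.sum_sub_distrib, hx1, Finset.sum_const, Finset.card_univ, Fintype.card_fin,
        nsmul_eq_mul]
    have hchain : (1:ℝ) ≤ (1 - ((n * (n + 1) / 2 : ℕ) : ℝ) * ε) * d b + ε * (n:ℝ) := by
      have e : ∀ γ, x γ * d γ = (x γ - ε) * d γ + ε * d γ := fun γ => by ring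
      have step1 : (1:ℝ) = (∑ γ, (x γ - ε) * d γ) + ε * ∑ γ, d γ := by
        rw [← hgd]
        simp only [e, Finset.sum_add_distrib]
        congr 1
        rw [Finset.mul_sum]
      have step2 : (∑ γ, (x γ - ε) * d γ) ≤ ∑ γ, (x γ - ε) * d b :=
        Finset.sum_le_sum fun γ _ =>
          mul_le_mul_of_nonneg_left (hdmax γ) (by linarith [hx2 γ])
      have step3 : ε * ∑ γ, d γ ≤ ε * (n:ℝ) := mul_le_mul_of_nonneg_left hsumd hε.le
      have step4 : (∑ γ, (x γ - ε) * d b) = (1 - ((n * (n + 1) / 2 : ℕ) : ℝ) * ε) * d b := by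
        rw [← Finset.sum_mul, hsub]
      calc (1:ℝ) = (∑ γ, (x γ - ε) * d γ) + ε * ∑ γ, d γ := step1
      _ ≤ (∑ γ, (x γ - ε) * d b) + ε * (n:ℝ) := add_le_add step2 step3
      _ = (1 - ((n * (n + 1) / 2 : ℕ) : ℝ) * ε) * d b + ε * (n:ℝ) := by rw [step4]
    have h1N : (0:ℝ) ≤ 1 - ((n * (n + 1) / 2 : ℕ) : ℝ) * ε := by linarith [hNε]
    have h4 : (1 - ((n * (n + 1) / 2 : ℕ) : ℝ) * ε) * d b
        ≤ (1 - ((n * (n + 1) / 2 : ℕ) : ℝ) * ε) := by nlinarith [h1N, hdb1]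
    have h5 : ε * (n:ℝ) < ε * ((n * (n + 1) / 2 : ℕ) : ℝ) :=
      mul_lt_mul_of_pos_left hNn hε
    linarith
end
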